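/- arXiv:2008.00822 — 4 statements merged into one kernel-verified Lean document; each statement's English description precedes it below -/
import Mathlib

section
/- (Proposition 2, part 1, in contracted form.) Let g be a pointwise-hermitian C¹ metric on ℂⁿ with real and imaginary parts g = g^R + i·g^I. Then at every point, for every index γ and every real vector u ∈ ℝⁿ: Σ_{α,β} (∂_γ̄ g_{αβ̄} − ∂_β̄ g_{αγ̄} − ∂_α g_{βγ̄}) u^α u^β = Σ_{α,β} (Φ^{γ++}_{αβ} + i·Φ^{γ+-}_{αβ} + (i/2)·∂^t_γ g^R_{αβ̄}) u^α u^β. -/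
open Complex

noncomputable section

/-- The `α`-th standard basis vector of `ℂⁿ`. -/
def eV (n : ℕ) (α : Fin n) : Fin n → ℂ := fun i => if i = α then 1 else 0

/-- `∂^x_α`: partial derivative of `f : ℂⁿ → ℂ` at `z` in the real direction `x^α`. -/
def dX {n : ℕ} (α : Fin n) (f : (Fin n → ℂ) → ℂ) (z : Fin n → ℂ) : ℂ :=
  deriv (fun s : ℝ => f (fun i => z i + (s : ℂ) * eV n α i)) 0

/-- `∂^t_α`: partial derivative of `f : ℂⁿ → ℂ` at `z` in the imaginary direction `t^α`. -/
def dT {n : ℕ} (α : Fin n) (f : (Fin n → ℂ) → ℂ) (z : Fin n → ℂ) : ℂ :=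
  deriv (fun s : ℝ => f (fun i => z i + (s : ℂ) * Complex.I * eV n α i)) 0

/-- Wirtinger derivative `∂_α = ½(∂^x_α − i ∂^t_α)`. -/
def dW {n : ℕ} (α : Fin n) (f : (Fin n → ℂ) → ℂ) (z : Fin n → ℂ) : ℂ :=
  (dX α f z - Complex.I * dT α f z) / 2

/-- Conjugate Wirtinger derivative `∂_ᾱ = ½(∂^x_α + i ∂^t_α)`. -/
def dWbar {n : ℕ} (α : Fin n) (f : (Fin n → ℂ) → ℂ) (z : Fin n → ℂ) : ℂ :=
  (dX α f z + Complex.I * dT α f z) / 2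

/-- The `(i,j)` entry of the metric, as a `ℂ`-valued function `g_{i j̄}`. -/
def gF {n : ℕ} (g : (Fin n → ℂ) → Matrix (Fin n) (Fin n) ℂ) (i j : Fin n) :
    (Fin n → ℂ) → ℂ := fun z => g z i j

/-- The real part `g^R_{i j̄}` of the metric entry, coerced into `ℂ`. -/
def gR {n : ℕ} (g : (Fin n → ℂ) → Matrix (Fin n) (Fin n) ℂ) (i j : Fin n) :
    (Fin n → ℂ) → ℂ := fun z => ((g z i j).re : ℂ)

/-- The imaginary part `g^I_{i j̄}` of the metric entry, coerced into `ℂ`. -/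
def gI {n : ℕ} (g : (Fin n → ℂ) → Matrix (Fin n) (Fin n) ℂ) (i j : Fin n) :
    (Fin n → ℂ) → ℂ := fun z => ((g z i j).im : ℂ)

/-- `g` is pointwise hermitian: `g_{αβ̄} = conj (g_{βᾱ})`. -/
def IsHermitianMetric {n : ℕ} (g : (Fin n → ℂ) → Matrix (Fin n) (Fin n) ℂ) : Prop :=
  ∀ z i j, g z i j = (starRingEnd ℂ) (g z j i)

/-- `g` is continuously differentiable (entrywise, as a map over `ℝ`). -/
def MetricC1 {n : ℕ} (g : (Fin n → ℂ) → Matrix (Fin n) (Fin n) ℂ) : Prop :=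
  ∀ i j, ContDiff ℝ 1 (gF g i j)

/-- Primary field `Φ^{γ++}_{αβ}`. -/
def PhiPP {n : ℕ} (g : (Fin n → ℂ) → Matrix (Fin n) (Fin n) ℂ) (γ α β : Fin n)
    (z : Fin n → ℂ) : ℂ :=
  (dX γ (gR g α β) z - dX α (gR g β γ) z - dX β (gR g α γ) z) / 2

/-- Primary field `Φ^{γ+-}_{αβ}`. -/
def PhiPM {n : ℕ} (g : (Fin n → ℂ) → Matrix (Fin n) (Fin n) ℂ) (γ α β : Fin n)
    (z : Fin n → ℂ) : ℂ :=
  (dX γ (gI g α β) z - dX α (gI g β γ) z - dX β (gI g α γ) z) / 2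

/-- Primary field `Φ^{γ-+}_{αβ}`. -/
def PhiMP {n : ℕ} (g : (Fin n → ℂ) → Matrix (Fin n) (Fin n) ℂ) (γ α β : Fin n)
    (z : Fin n → ℂ) : ℂ :=
  (dT γ (gR g α β) z - dT α (gR g β γ) z - dT β (gR g α γ) z) / 2

/-- Primary field `Φ^{γ--}_{αβ}`. -/
def PhiMM {n : ℕ} (g : (Fin n → ℂ) → Matrix (Fin n) (Fin n) ℂ) (γ α β : Fin n)
    (z : Fin n → ℂ) : ℂ :=
  (dT γ (gI g α β) z - dT α (gI g β γ) z - dT β (gI g α γ) z) / 2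

/-- Secondary field `F^x_{αγβ}`. -/
def Fx {n : ℕ} (g : (Fin n → ℂ) → Matrix (Fin n) (Fin n) ℂ) (α γ β : Fin n)
    (z : Fin n → ℂ) : ℂ :=
  dX γ (gI g α β) z - dX β (gI g α γ) z

/-- Secondary field `F^t_{αγβ}`. -/
def Ft {n : ℕ} (g : (Fin n → ℂ) → Matrix (Fin n) (Fin n) ℂ) (α γ β : Fin n)
    (z : Fin n → ℂ) : ℂ :=
  dT γ (gI g α β) z - dT β (gI g α γ) z

/-- The Lagrangian `L(z,v) = sqrt(Re Σ g_{αβ̄}(z) v^α conj(v^β))`. -/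
def Lag {n : ℕ} (g : (Fin n → ℂ) → Matrix (Fin n) (Fin n) ℂ) (z v : Fin n → ℂ) : ℝ :=
  Real.sqrt (∑ α, ∑ β, g z α β * v α * (starRingEnd ℂ) (v β)).re

/-- Wirtinger derivative with respect to `conj(v^γ)` of a real-valued function on `ℂⁿ`:
`½(∂/∂(Re v^γ) + i·∂/∂(Im v^γ))`. -/
def dWbarR {n : ℕ} (γ : Fin n) (f : (Fin n → ℂ) → ℝ) (v : Fin n → ℂ) : ℂ :=
  ((deriv (fun s : ℝ => f (fun i => v i + (s : ℂ) * eV n γ i)) 0 : ℝ) +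
    Complex.I *
      (deriv (fun s : ℝ => f (fun i => v i + (s : ℂ) * Complex.I * eV n γ i)) 0 : ℝ)) / 2

/-- The Lagrangian speed `L(σ)` of a curve `z : ℝ → ℂⁿ`. -/
def curveL {n : ℕ} (g : (Fin n → ℂ) → Matrix (Fin n) (Fin n) ℂ) (z : ℝ → Fin n → ℂ)
    (σ : ℝ) : ℝ :=
  Lag g (z σ) (fun α => deriv (fun τ => z τ α) σ)

/-- `Dz^α = (1/L)·dz^α/dσ`. -/
def Dz {n : ℕ} (g : (Fin n → ℂ) → Matrix (Fin n) (Fin n) ℂ) (z : ℝ → Fin n → ℂ)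
    (α : Fin n) (σ : ℝ) : ℂ :=
  (curveL g z σ : ℂ)⁻¹ * deriv (fun τ => z τ α) σ

/-- `D²z^α = (1/L)·d/dσ((1/L)·dz^α/dσ)`. -/
def D2z {n : ℕ} (g : (Fin n → ℂ) → Matrix (Fin n) (Fin n) ℂ) (z : ℝ → Fin n → ℂ)
    (α : Fin n) (σ : ℝ) : ℂ :=
  (curveL g z σ : ℂ)⁻¹ *
    deriv (fun τ => (curveL g z τ : ℂ)⁻¹ * deriv (fun s => z s α) τ) σ

/-- `Dx^α = (1/L)·dx^α/dσ`. -/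
def Dx {n : ℕ} (g : (Fin n → ℂ) → Matrix (Fin n) (Fin n) ℂ) (z : ℝ → Fin n → ℂ)
    (α : Fin n) (σ : ℝ) : ℝ :=
  (curveL g z σ)⁻¹ * deriv (fun τ => (z τ α).re) σ

/-- `Dt^α = (1/L)·dt^α/dσ`. -/
def Dt {n : ℕ} (g : (Fin n → ℂ) → Matrix (Fin n) (Fin n) ℂ) (z : ℝ → Fin n → ℂ)
    (α : Fin n) (σ : ℝ) : ℝ :=
  (curveL g z σ)⁻¹ * deriv (fun τ => (z τ α).im) σ

/-- `D²x^α = (1/L)·d/dσ((1/L)·dx^α/dσ)`. -/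
def D2x {n : ℕ} (g : (Fin n → ℂ) → Matrix (Fin n) (Fin n) ℂ) (z : ℝ → Fin n → ℂ)
    (α : Fin n) (σ : ℝ) : ℝ :=
  (curveL g z σ)⁻¹ *
    deriv (fun τ => (curveL g z τ)⁻¹ * deriv (fun s => (z s α).re) τ) σ

/-- `D²t^α = (1/L)·d/dσ((1/L)·dt^α/dσ)`. -/
def D2t {n : ℕ} (g : (Fin n → ℂ) → Matrix (Fin n) (Fin n) ℂ) (z : ℝ → Fin n → ℂ)
    (α : Fin n) (σ : ℝ) : ℝ :=
  (curveL g z σ)⁻¹ *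
    deriv (fun τ => (curveL g z τ)⁻¹ * deriv (fun s => (z s α).im) τ) σ

/-- The complex geodesic equation (Theorem 1's equation) for the curve `z`. -/
def GeodesicEq {n : ℕ} (g : (Fin n → ℂ) → Matrix (Fin n) (Fin n) ℂ)
    (z : ℝ → Fin n → ℂ) : Prop :=
  ∀ (γ : Fin n) (σ : ℝ),
    ∑ μ, g (z σ) μ γ * D2z g z μ σ =
      (∑ α, ∑ β, (dWbar γ (gF g α β) (z σ) - dWbar β (gF g α γ) (z σ)) *
          Dz g z α σ * (starRingEnd ℂ) (Dz g z β σ)) -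
        ∑ α, ∑ β, dW α (gF g β γ) (z σ) * Dz g z α σ * Dz g z β σ

/-- The real part of the metric as a real matrix. -/
def gRmat {n : ℕ} (g : (Fin n → ℂ) → Matrix (Fin n) (Fin n) ℂ) (z : Fin n → ℂ) :
    Matrix (Fin n) (Fin n) ℝ :=
  Matrix.of fun i j => (g z i j).re

/-- The link tensor `ε^η_γ = Σ_ν g^I_{νγ̄} ((g^R)⁻¹)_{νη}`. -/
def eps {n : ℕ} (g : (Fin n → ℂ) → Matrix (Fin n) (Fin n) ℂ) (z : Fin n → ℂ)
    (η γ : Fin n) : ℝ :=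
  ∑ ν, (g z ν γ).im * (gRmat g z)⁻¹ ν η


/-- Splitting a derivative of a complex-valued function into real and imaginary parts. -/
lemma deriv_reim_split (h : ℝ → ℂ) (hd : DifferentiableAt ℝ h 0) :
    deriv h 0 = deriv (fun s => ((h s).re : ℂ)) 0 +
      Complex.I * deriv (fun s => ((h s).im : ℂ)) 0 := by
  have hre : DifferentiableAt ℝ (fun s => ((h s).re : ℂ)) 0 :=
    (Complex.ofRealCLM.differentiable.comp
      Complex.reCLM.differentiable).differentiableAt.comp 0 hd
  have him : DifferentiableAt ℝ (fun s => ((h s).im : ℂ)) 0 :=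
    (Complex.ofRealCLM.differentiable.comp
      Complex.imCLM.differentiable).differentiableAt.comp 0 hd
  calc deriv h 0 = deriv (fun s => ((h s).re : ℂ) + ((h s).im : ℂ) * Complex.I) 0 := by
        congr 1; funext s; rw [Complex.re_add_im]
    _ = deriv (fun s => ((h s).re : ℂ)) 0 +
          deriv (fun s => ((h s).im : ℂ)) 0 * Complex.I := by
        rw [deriv_fun_add hre (him.mul_const _), deriv_mul_const him]
    _ = _ := by ring

lemma pathX_diff {n : ℕ} (z : Fin n → ℂ) (μ : Fin n) :
    Differentiable ℝ (fun s : ℝ => (fun i => z i + (s : ℂ) * eV n μ i)) := by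
  apply differentiable_pi.mpr
  intro i
  exact (differentiable_const _).add (Complex.ofRealCLM.differentiable.mul_const _)

lemma pathT_diff {n : ℕ} (z : Fin n → ℂ) (μ : Fin n) :
    Differentiable ℝ (fun s : ℝ => (fun i => z i + (s : ℂ) * Complex.I * eV n μ i)) := by
  apply differentiable_pi.mpr
  intro i
  exact (differentiable_const _).add
    ((Complex.ofRealCLM.differentiable.mul_const _).mul_const _)

lemma dX_split {n : ℕ} (g : (Fin n → ℂ) → Matrix (Fin n) (Fin n) ℂ) (hg : MetricC1 g)
    (a b μ : Fin n) (z : Fin n → ℂ) :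
    dX μ (gF g a b) z = dX μ (gR g a b) z + Complex.I * dX μ (gI g a b) z :=
  deriv_reim_split _ ((((hg a b).differentiable one_ne_zero).comp (pathX_diff z μ)).differentiableAt)

lemma dT_split {n : ℕ} (g : (Fin n → ℂ) → Matrix (Fin n) (Fin n) ℂ) (hg : MetricC1 g)
    (a b μ : Fin n) (z : Fin n → ℂ) :
    dT μ (gF g a b) z = dT μ (gR g a b) z + Complex.I * dT μ (gI g a b) z :=
  deriv_reim_split _ ((((hg a b).differentiable one_ne_zero).comp (pathT_diff z μ)).differentiableAt)

lemma dX_neg {n : ℕ} (μ : Fin n) (f : (Fin n → ℂ) → ℂ) (z : Fin n → ℂ) :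
    dX μ (fun w => -(f w)) z = -dX μ f z := by
  unfold dX; exact deriv.neg

lemma dT_neg {n : ℕ} (μ : Fin n) (f : (Fin n → ℂ) → ℂ) (z : Fin n → ℂ) :
    dT μ (fun w => -(f w)) z = -dT μ f z := by
  unfold dT; exact deriv.neg

lemma gR_symm {n : ℕ} (g : (Fin n → ℂ) → Matrix (Fin n) (Fin n) ℂ)
    (hherm : IsHermitianMetric g) (a b : Fin n) : gR g b a = gR g a b := by
  funext w; simp [gR, hherm w a b]

lemma gI_anti {n : ℕ} (g : (Fin n → ℂ) → Matrix (Fin n) (Fin n) ℂ)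
    (hherm : IsHermitianMetric g) (a b : Fin n) :
    gI g b a = fun w => -(gI g a b w) := by
  funext w; simp [gI, hherm w a b]

/-- A symmetric quadratic-form congruence: if the symmetrizations of `F` and `G` agree,
then their contractions with `u ⊗ u` agree. -/
lemma symm_sum_eq {n : ℕ} (u : Fin n → ℝ) (F G : Fin n → Fin n → ℂ)
    (h : ∀ a b, F a b + F b a = G a b + G b a) :
    ∑ a, ∑ b, F a b * (u a : ℂ) * (u b : ℂ) =
      ∑ a, ∑ b, G a b * (u a : ℂ) * (u b : ℂ) := by
  have swap : ∀ (F : Fin n → Fin n → ℂ),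
      ∑ a, ∑ b, F a b * (u a : ℂ) * (u b : ℂ) =
        ∑ a, ∑ b, F b a * (u a : ℂ) * (u b : ℂ) := by
    intro F
    rw [Finset.sum_comm]
    exact Finset.sum_congr rfl fun a _ => Finset.sum_congr rfl fun b _ => by ring
  have expand : ∀ (F : Fin n → Fin n → ℂ),
      ∑ a, ∑ b, (F a b + F b a) * (u a : ℂ) * (u b : ℂ) =
        2 * ∑ a, ∑ b, F a b * (u a : ℂ) * (u b : ℂ) := by
    intro F
    have h1 : ∑ a, ∑ b, (F a b + F b a) * (u a : ℂ) * (u b : ℂ)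
        = (∑ a, ∑ b, F a b * (u a : ℂ) * (u b : ℂ)) +
          ∑ a, ∑ b, F b a * (u a : ℂ) * (u b : ℂ) := by
      simp only [add_mul, Finset.sum_add_distrib]
    rw [h1, ← swap F, two_mul]
  have h2 : ∑ a, ∑ b, (F a b + F b a) * (u a : ℂ) * (u b : ℂ) =
      ∑ a, ∑ b, (G a b + G b a) * (u a : ℂ) * (u b : ℂ) :=
    Finset.sum_congr rfl fun a _ => Finset.sum_congr rfl fun b _ => by rw [h a b]
  exact mul_left_cancel₀ two_ne_zero ((expand F).symm.trans (h2.trans (expand G)))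

/-- Proposition 2, part 1 (contracted with a real vector `u`):
`Σ (∂_γ̄ g_{αβ̄} − ∂_β̄ g_{αγ̄} − ∂_α g_{βγ̄}) u^α u^β
  = Σ (Φ^{γ++} + i Φ^{γ+-} + (i/2) ∂^t_γ g^R) u^α u^β`. -/
theorem prop2_part1 {n : ℕ} (g : (Fin n → ℂ) → Matrix (Fin n) (Fin n) ℂ)
    (hg : MetricC1 g) (hherm : IsHermitianMetric g)
    (z : Fin n → ℂ) (γ : Fin n) (u : Fin n → ℝ) :
    ∑ α, ∑ β,
        (dWbar γ (gF g α β) z - dWbar β (gF g α γ) z - dW α (gF g β γ) z) *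
          (u α : ℂ) * (u β : ℂ) =
      ∑ α, ∑ β,
        (PhiPP g γ α β z + Complex.I * PhiPM g γ α β z +
            Complex.I / 2 * dT γ (gR g α β) z) *
          (u α : ℂ) * (u β : ℂ) := by
  refine symm_sum_eq u _ _ ?_
  intro a b
  simp only [dWbar, dW, PhiPP, PhiPM, dX_split g hg, dT_split g hg,
    gR_symm g hherm a b, gI_anti g hherm a b, dX_neg, dT_neg]
  ring
end
end

section
/- (Real part of the dual identity.) Let g be a pointwise-hermitian C¹ metric on ℂⁿ with g = g^R + i·g^I, and let z = x + it : ℝ → ℂⁿ be a C² curve with L(σ) > 0 satisfying the complex geodesic equation. Then for every index γ and every σ: Σ_μ g^R_{μγ̄}(z) D²x^μ − Σ_μ g^I_{μγ̄}(z) D²t^μ = Σ_{α,β} Φ^{γ++}_{αβ} Dx^α Dx^β + Σ_{α,β} (½·∂^x_γ g^R_{αβ̄} − Φ^{γ--}_{αβ}) Dt^α Dt^β − Σ_{α,β} (F^x_{αγβ} + ∂^t_α g^R_{βγ̄}) Dt^α Dx^β, all coefficient functions evaluated at z(σ). -/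
open Complex

noncomputable section

namespace DualAux

open Complex

/-- `deriv` commutes with `Complex.ofReal` post-composition (unconditionally). -/
lemma deriv_ofReal_comp (r : ℝ → ℝ) (t : ℝ) :
    deriv (fun s => ((r s : ℝ) : ℂ)) t = ((deriv r t : ℝ) : ℂ) := by
  by_cases h : DifferentiableAt ℝ r t
  · exact (Complex.ofRealCLM.hasFDerivAt.comp_hasDerivAt t h.hasDerivAt).deriv
  · rw [deriv_zero_of_not_differentiableAt h, Complex.ofReal_zero,
      deriv_zero_of_not_differentiableAt]
    intro hc
    apply h
    have h2 := (Complex.reCLM.hasFDerivAt.comp_hasDerivAt t hc.hasDerivAt).differentiableAt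
    simpa [Function.comp_def, Complex.reCLM_apply] using h2

/-- `deriv` commutes with conjugation post-composition (unconditionally). -/
lemma deriv_conj_comp (F : ℝ → ℂ) (t : ℝ) :
    deriv (fun s => (starRingEnd ℂ) (F s)) t = (starRingEnd ℂ) (deriv F t) := by
  by_cases h : DifferentiableAt ℝ F t
  · have := (Complex.conjCLE.toContinuousLinearMap.hasFDerivAt.comp_hasDerivAt
      t h.hasDerivAt).deriv
    simpa [Function.comp_def, Complex.conjCAE_apply] using this
  · rw [deriv_zero_of_not_differentiableAt h, map_zero,
      deriv_zero_of_not_differentiableAt]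
    intro hc
    apply h
    have h2 := (Complex.conjCLE.toContinuousLinearMap.hasFDerivAt.comp_hasDerivAt
      t hc.hasDerivAt).differentiableAt
    simpa [Function.comp_def, Complex.conj_conj] using h2

lemma deriv_re_comp (F : ℝ → ℂ) (t : ℝ) (h : DifferentiableAt ℝ F t) :
    deriv (fun s => (F s).re) t = (deriv F t).re := by
  simpa [Function.comp_def, Complex.reCLM_apply] using (Complex.reCLM.hasFDerivAt.comp_hasDerivAt t h.hasDerivAt).deriv

lemma deriv_im_comp (F : ℝ → ℂ) (t : ℝ) (h : DifferentiableAt ℝ F t) :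
    deriv (fun s => (F s).im) t = (deriv F t).im := by
  simpa [Function.comp_def, Complex.imCLM_apply] using (Complex.imCLM.hasFDerivAt.comp_hasDerivAt t h.hasDerivAt).deriv

variable {n : ℕ}

lemma diff_path (f : (Fin n → ℂ) → ℂ) (hf : ContDiff ℝ 1 f) (w c : Fin n → ℂ) :
    DifferentiableAt ℝ (fun s : ℝ => f (fun i => w i + (s : ℂ) * c i)) 0 := by
  have hor : Differentiable ℝ (fun s : ℝ => (s : ℂ)) :=
    Complex.ofRealCLM.differentiable
  have hp : Differentiable ℝ (fun s : ℝ => fun i => w i + (s : ℂ) * c i) := by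
    rw [differentiable_pi]
    intro i
    exact (differentiable_const _).add (hor.mul_const _)
  exact ((hf.differentiable (by norm_num)).comp hp) 0

lemma diff_pathI (f : (Fin n → ℂ) → ℂ) (hf : ContDiff ℝ 1 f) (w : Fin n → ℂ) (a : Fin n) :
    DifferentiableAt ℝ (fun s : ℝ => f (fun i => w i + (s : ℂ) * Complex.I * eV n a i)) 0 := by
  simp only [mul_assoc]
  exact diff_path f hf w fun i => Complex.I * eV n a i

variable (g : (Fin n → ℂ) → Matrix (Fin n) (Fin n) ℂ)

lemma dX_gR_eq (hg : MetricC1 g) (a i j : Fin n) (w : Fin n → ℂ) :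
    dX a (gR g i j) w = (((dX a (gF g i j) w).re : ℝ) : ℂ) := by
  have hd : DifferentiableAt ℝ (fun s : ℝ => gF g i j (fun k => w k + (s : ℂ) * eV n a k)) 0 :=
    diff_path (gF g i j) (hg i j) w (eV n a)
  unfold dX
  calc deriv (fun s : ℝ => gR g i j (fun k => w k + (s : ℂ) * eV n a k)) 0
      = deriv (fun s : ℝ =>
          (((gF g i j (fun k => w k + (s : ℂ) * eV n a k)).re : ℝ) : ℂ)) 0 := rfl
    _ = ((deriv (fun s : ℝ =>
          (gF g i j (fun k => w k + (s : ℂ) * eV n a k)).re) 0 : ℝ) : ℂ) :=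
        deriv_ofReal_comp _ 0
    _ = _ := by rw [deriv_re_comp _ 0 hd]

lemma dX_gI_eq (hg : MetricC1 g) (a i j : Fin n) (w : Fin n → ℂ) :
    dX a (gI g i j) w = (((dX a (gF g i j) w).im : ℝ) : ℂ) := by
  have hd : DifferentiableAt ℝ (fun s : ℝ => gF g i j (fun k => w k + (s : ℂ) * eV n a k)) 0 :=
    diff_path (gF g i j) (hg i j) w (eV n a)
  unfold dX
  calc deriv (fun s : ℝ => gI g i j (fun k => w k + (s : ℂ) * eV n a k)) 0
      = deriv (fun s : ℝ =>
          (((gF g i j (fun k => w k + (s : ℂ) * eV n a k)).im : ℝ) : ℂ)) 0 := rfl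
    _ = ((deriv (fun s : ℝ =>
          (gF g i j (fun k => w k + (s : ℂ) * eV n a k)).im) 0 : ℝ) : ℂ) :=
        deriv_ofReal_comp _ 0
    _ = _ := by rw [deriv_im_comp _ 0 hd]

lemma dT_gR_eq (hg : MetricC1 g) (a i j : Fin n) (w : Fin n → ℂ) :
    dT a (gR g i j) w = (((dT a (gF g i j) w).re : ℝ) : ℂ) := by
  have hd : DifferentiableAt ℝ
      (fun s : ℝ => gF g i j (fun k => w k + (s : ℂ) * Complex.I * eV n a k)) 0 :=
    diff_pathI (gF g i j) (hg i j) w a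
  unfold dT
  calc deriv (fun s : ℝ => gR g i j (fun k => w k + (s : ℂ) * Complex.I * eV n a k)) 0
      = deriv (fun s : ℝ =>
          (((gF g i j (fun k => w k + (s : ℂ) * Complex.I * eV n a k)).re : ℝ) : ℂ)) 0 := rfl
    _ = ((deriv (fun s : ℝ =>
          (gF g i j (fun k => w k + (s : ℂ) * Complex.I * eV n a k)).re) 0 : ℝ) : ℂ) :=
        deriv_ofReal_comp _ 0
    _ = _ := by rw [deriv_re_comp _ 0 hd]

lemma dT_gI_eq (hg : MetricC1 g) (a i j : Fin n) (w : Fin n → ℂ) :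
    dT a (gI g i j) w = (((dT a (gF g i j) w).im : ℝ) : ℂ) := by
  have hd : DifferentiableAt ℝ
      (fun s : ℝ => gF g i j (fun k => w k + (s : ℂ) * Complex.I * eV n a k)) 0 :=
    diff_pathI (gF g i j) (hg i j) w a
  unfold dT
  calc deriv (fun s : ℝ => gI g i j (fun k => w k + (s : ℂ) * Complex.I * eV n a k)) 0
      = deriv (fun s : ℝ =>
          (((gF g i j (fun k => w k + (s : ℂ) * Complex.I * eV n a k)).im : ℝ) : ℂ)) 0 := rfl
    _ = ((deriv (fun s : ℝ =>
          (gF g i j (fun k => w k + (s : ℂ) * Complex.I * eV n a k)).im) 0 : ℝ) : ℂ) :=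
        deriv_ofReal_comp _ 0
    _ = _ := by rw [deriv_im_comp _ 0 hd]

lemma dX_conj (hherm : IsHermitianMetric g) (a i j : Fin n) (w : Fin n → ℂ) :
    dX a (gF g i j) w = (starRingEnd ℂ) (dX a (gF g j i) w) := by
  unfold dX
  rw [show (fun s : ℝ => gF g i j (fun k => w k + (s : ℂ) * eV n a k)) =
      (fun s : ℝ => (starRingEnd ℂ) (gF g j i (fun k => w k + (s : ℂ) * eV n a k))) from
    funext fun s => hherm _ i j]
  exact deriv_conj_comp _ 0

lemma dT_conj (hherm : IsHermitianMetric g) (a i j : Fin n) (w : Fin n → ℂ) :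
    dT a (gF g i j) w = (starRingEnd ℂ) (dT a (gF g j i) w) := by
  unfold dT
  rw [show (fun s : ℝ => gF g i j (fun k => w k + (s : ℂ) * Complex.I * eV n a k)) =
      (fun s : ℝ => (starRingEnd ℂ) (gF g j i (fun k => w k + (s : ℂ) * Complex.I * eV n a k))) from
    funext fun s => hherm _ i j]
  exact deriv_conj_comp _ 0

lemma re2 (a b c d : ℝ) :
    ((((a : ℝ) : ℂ) + ((b : ℝ) : ℂ) * Complex.I) *
      (((c : ℝ) : ℂ) + ((d : ℝ) : ℂ) * Complex.I)).re = a * c - b * d := by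
  simp [Complex.mul_re, Complex.mul_im]

lemma re3 (a b c d e f : ℝ) :
    (((((a : ℝ) : ℂ) + ((b : ℝ) : ℂ) * Complex.I) *
        (((c : ℝ) : ℂ) + ((d : ℝ) : ℂ) * Complex.I)) *
      (((e : ℝ) : ℂ) + ((f : ℝ) : ℂ) * Complex.I)).re =
    (a * c - b * d) * e - (a * d + b * c) * f := by
  simp [Complex.mul_re, Complex.mul_im]
  try ring

lemma sum_antisym_zero (f : Fin n → Fin n → ℝ) (hf : ∀ a b, f a b + f b a = 0) :
    (∑ a, ∑ b, f a b) = 0 := by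
  have h2 : (∑ a, ∑ b, f b a) = ∑ a, ∑ b, f a b := Finset.sum_comm
  have h1 : (∑ a, ∑ b, f a b) + (∑ a, ∑ b, f b a) = 0 := by
    rw [← Finset.sum_add_distrib]
    calc ∑ a : Fin n, ((∑ b, f a b) + (∑ b, f b a))
        = ∑ a : Fin n, ∑ b, (f a b + f b a) :=
          Finset.sum_congr rfl fun a _ => Finset.sum_add_distrib.symm
      _ = 0 := by simp [hf]
  linarith

end DualAux

/-- Real part of the dual identity: along a complex geodesic,
`Σ g^R_{μγ̄} D²x^μ − Σ g^I_{μγ̄} D²t^μ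
  = Σ Φ^{γ++} Dx Dx + Σ (½∂^x_γ g^R − Φ^{γ--}) Dt Dt − Σ (F^x_{αγβ} + ∂^t_α g^R_{βγ̄}) Dt^α Dx^β`. -/
theorem dual_identity_real_part {n : ℕ}
    (g : (Fin n → ℂ) → Matrix (Fin n) (Fin n) ℂ)
    (hg : MetricC1 g) (hherm : IsHermitianMetric g)
    (z : ℝ → Fin n → ℂ) (hz : ContDiff ℝ 2 z)
    (hL : ∀ σ, 0 < curveL g z σ) (hgeo : GeodesicEq g z)
    (γ : Fin n) (σ : ℝ) :
    (∑ μ, gR g μ γ (z σ) * (D2x g z μ σ : ℂ)) -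
        ∑ μ, gI g μ γ (z σ) * (D2t g z μ σ : ℂ) =
      (∑ α, ∑ β, PhiPP g γ α β (z σ) * (Dx g z α σ : ℂ) * (Dx g z β σ : ℂ)) +
        (∑ α, ∑ β, (dX γ (gR g α β) (z σ) / 2 - PhiMM g γ α β (z σ)) *
          (Dt g z α σ : ℂ) * (Dt g z β σ : ℂ)) -
        ∑ α, ∑ β, (Fx g α γ β (z σ) + dT α (gR g β γ) (z σ)) *
          (Dt g z α σ : ℂ) * (Dx g z β σ : ℂ) := by
  classical
  obtain ⟨Rf, hRf⟩ : ∃ Rf : Fin n → Fin n → ℝ, ∀ i j, (g (z σ) i j).re = Rf i j :=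
    ⟨_, fun _ _ => rfl⟩
  obtain ⟨Sf, hSf⟩ : ∃ Sf : Fin n → Fin n → ℝ, ∀ i j, (g (z σ) i j).im = Sf i j :=
    ⟨_, fun _ _ => rfl⟩
  obtain ⟨XR, hXR⟩ : ∃ XR : Fin n → Fin n → Fin n → ℝ,
      ∀ a i j, (dX a (gF g i j) (z σ)).re = XR a i j := ⟨_, fun _ _ _ => rfl⟩
  obtain ⟨XI, hXI⟩ : ∃ XI : Fin n → Fin n → Fin n → ℝ,
      ∀ a i j, (dX a (gF g i j) (z σ)).im = XI a i j := ⟨_, fun _ _ _ => rfl⟩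
  obtain ⟨TR, hTR⟩ : ∃ TR : Fin n → Fin n → Fin n → ℝ,
      ∀ a i j, (dT a (gF g i j) (z σ)).re = TR a i j := ⟨_, fun _ _ _ => rfl⟩
  obtain ⟨TI, hTI⟩ : ∃ TI : Fin n → Fin n → Fin n → ℝ,
      ∀ a i j, (dT a (gF g i j) (z σ)).im = TI a i j := ⟨_, fun _ _ _ => rfl⟩
  obtain ⟨u, hu⟩ : ∃ u : Fin n → ℝ, ∀ a, Dx g z a σ = u a := ⟨_, fun _ => rfl⟩
  obtain ⟨v, hv⟩ : ∃ v : Fin n → ℝ, ∀ a, Dt g z a σ = v a := ⟨_, fun _ => rfl⟩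
  obtain ⟨p, hp⟩ : ∃ p : Fin n → ℝ, ∀ a, D2x g z a σ = p a := ⟨_, fun _ => rfl⟩
  obtain ⟨q, hq⟩ : ∃ q : Fin n → ℝ, ∀ a, D2t g z a σ = q a := ⟨_, fun _ => rfl⟩
  -- differentiability infrastructure
  have hzc : ∀ a : Fin n, ContDiff ℝ 2 fun τ => z τ a := fun a =>
    (ContinuousLinearMap.proj (R := ℝ) (φ := fun _ : Fin n => ℂ) a).contDiff.comp hz
  have hzd : ∀ (a : Fin n) (τ : ℝ), DifferentiableAt ℝ (fun s => z s a) τ := fun a τ =>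
    ((hzc a).differentiable (by norm_num)).differentiableAt
  have hz' : ∀ a : Fin n, Differentiable ℝ (deriv fun s => z s a) := by
    intro a
    have h2 : ContDiff ℝ ((1 : ℕ) + 1) fun τ => z τ a := by
      exact_mod_cast hzc a
    exact ((contDiff_succ_iff_deriv.mp h2).2.2).differentiable (by norm_num)
  have hgz : ∀ i j : Fin n, Differentiable ℝ fun τ => gF g i j (z τ) := fun i j =>
    ((hg i j).differentiable (by norm_num)).comp (hz.differentiable (by norm_num))
  have hbig : Differentiable ℝ fun τ =>
      ∑ α, ∑ β, g (z τ) α β * deriv (fun s => z s α) τ *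
        (starRingEnd ℂ) (deriv (fun s => z s β) τ) := by
    apply Differentiable.fun_sum
    intro a _
    apply Differentiable.fun_sum
    intro b _
    have hc : Differentiable ℝ fun τ => (starRingEnd ℂ) (deriv (fun s => z s b) τ) := by
      have := Complex.conjCLE.differentiable.comp (hz' b)
      simpa [Function.comp_def] using this
    exact ((hgz a b).mul (hz' a)).mul hc
  have hQ : Differentiable ℝ fun τ =>
      (∑ α, ∑ β, g (z τ) α β * deriv (fun s => z s α) τ *
        (starRingEnd ℂ) (deriv (fun s => z s β) τ)).re := by
    have := Complex.reCLM.differentiable.comp hbig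
    simpa [Function.comp_def] using this
  have hcurveL_eq : ∀ τ, curveL g z τ =
      Real.sqrt ((∑ α, ∑ β, g (z τ) α β * deriv (fun s => z s α) τ *
        (starRingEnd ℂ) (deriv (fun s => z s β) τ)).re) := fun τ => rfl
  have hQpos : 0 < (∑ α, ∑ β, g (z σ) α β * deriv (fun s => z s α) σ *
      (starRingEnd ℂ) (deriv (fun s => z s β) σ)).re := by
    have := hL σ
    rw [hcurveL_eq σ] at this
    exact Real.sqrt_pos.mp this
  have hLdiff : DifferentiableAt ℝ (curveL g z) σ := by
    have h1 := ((Real.hasDerivAt_sqrt hQpos.ne').comp σ (hQ σ).hasDerivAt).differentiableAt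
    have : curveL g z = fun τ => Real.sqrt ((∑ α, ∑ β, g (z τ) α β * deriv (fun s => z s α) τ *
        (starRingEnd ℂ) (deriv (fun s => z s β) τ)).re) := funext hcurveL_eq
    rw [this]
    exact h1
  have hLCdiff : DifferentiableAt ℝ (fun τ => ((curveL g z τ : ℝ) : ℂ)) σ := by
    have := Complex.ofRealCLM.differentiableAt.comp σ hLdiff
    simpa [Function.comp_def] using this
  have hLne : ((curveL g z σ : ℝ) : ℂ) ≠ 0 := by
    exact_mod_cast (hL σ).ne'
  have hFdiff : ∀ a : Fin n, DifferentiableAt ℝ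
      (fun τ => ((curveL g z τ : ℝ) : ℂ)⁻¹ * deriv (fun s => z s a) τ) σ := fun a =>
    (hLCdiff.inv hLne).mul ((hz' a) σ)
  have hdre : ∀ (a : Fin n) (τ : ℝ),
      deriv (fun s => (z s a).re) τ = (deriv (fun s => z s a) τ).re := fun a τ =>
    DualAux.deriv_re_comp _ τ (hzd a τ)
  have hdim : ∀ (a : Fin n) (τ : ℝ),
      deriv (fun s => (z s a).im) τ = (deriv (fun s => z s a) τ).im := fun a τ =>
    DualAux.deriv_im_comp _ τ (hzd a τ)
  -- splitting of Dz and D2z into real and imaginary parts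
  have hDz : ∀ a : Fin n, Dz g z a σ = ((u a : ℝ) : ℂ) + ((v a : ℝ) : ℂ) * Complex.I := by
    intro a
    rw [← hu a, ← hv a]
    unfold Dz Dx Dt
    rw [hdre a σ, hdim a σ]
    push_cast
    linear_combination (-(((curveL g z σ : ℝ) : ℂ))⁻¹) *
      (Complex.re_add_im (deriv (fun s => z s a) σ))
  have hDzc : ∀ a : Fin n, (starRingEnd ℂ) (Dz g z a σ) =
      ((u a : ℝ) : ℂ) + ((-(v a) : ℝ) : ℂ) * Complex.I := by
    intro a
    rw [hDz a, map_add, map_mul, Complex.conj_ofReal, Complex.conj_ofReal, Complex.conj_I]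
    push_cast
    ring
  have hfre : ∀ a : Fin n, (fun τ => (curveL g z τ)⁻¹ * deriv (fun s => (z s a).re) τ) =
      fun τ => (((curveL g z τ : ℝ) : ℂ)⁻¹ * deriv (fun s => z s a) τ).re := by
    intro a
    funext τ
    rw [hdre a τ, ← Complex.ofReal_inv, Complex.re_ofReal_mul]
  have hfim : ∀ a : Fin n, (fun τ => (curveL g z τ)⁻¹ * deriv (fun s => (z s a).im) τ) =
      fun τ => (((curveL g z τ : ℝ) : ℂ)⁻¹ * deriv (fun s => z s a) τ).im := by
    intro a
    funext τ
    rw [hdim a τ, ← Complex.ofReal_inv, Complex.im_ofReal_mul]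
  have hD2z : ∀ a : Fin n, D2z g z a σ = ((p a : ℝ) : ℂ) + ((q a : ℝ) : ℂ) * Complex.I := by
    intro a
    rw [← hp a, ← hq a]
    unfold D2z D2x D2t
    rw [hfre a, hfim a, DualAux.deriv_re_comp _ σ (hFdiff a), DualAux.deriv_im_comp _ σ (hFdiff a)]
    push_cast
    linear_combination (-(((curveL g z σ : ℝ) : ℂ))⁻¹) *
      (Complex.re_add_im (deriv (fun τ => ((curveL g z τ : ℝ) : ℂ)⁻¹ *
        deriv (fun s => z s a) τ) σ))
  -- metric entries and their derivatives, split into real atoms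
  have hgentry : ∀ i j : Fin n, g (z σ) i j =
      ((Rf i j : ℝ) : ℂ) + ((Sf i j : ℝ) : ℂ) * Complex.I := by
    intro i j
    rw [← hRf, ← hSf]
    exact (Complex.re_add_im _).symm
  have hXgF : ∀ a i j : Fin n, dX a (gF g i j) (z σ) =
      ((XR a i j : ℝ) : ℂ) + ((XI a i j : ℝ) : ℂ) * Complex.I := by
    intro a i j
    rw [← hXR, ← hXI]
    exact (Complex.re_add_im _).symm
  have hTgF : ∀ a i j : Fin n, dT a (gF g i j) (z σ) =
      ((TR a i j : ℝ) : ℂ) + ((TI a i j : ℝ) : ℂ) * Complex.I := by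
    intro a i j
    rw [← hTR, ← hTI]
    exact (Complex.re_add_im _).symm
  have hA : ∀ α β : Fin n, dWbar γ (gF g α β) (z σ) - dWbar β (gF g α γ) (z σ) =
      (((XR γ α β - TI γ α β - XR β α γ + TI β α γ) / 2 : ℝ) : ℂ) +
      (((XI γ α β + TR γ α β - XI β α γ - TR β α γ) / 2 : ℝ) : ℂ) * Complex.I := by
    intro α β
    simp only [dWbar]
    rw [hXgF, hXgF, hTgF, hTgF]
    push_cast
    linear_combination (((TI γ α β : ℝ) : ℂ) / 2 - ((TI β α γ : ℝ) : ℂ) / 2) * Complex.I_sq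
  have hB : ∀ α β : Fin n, dW α (gF g β γ) (z σ) =
      (((XR α β γ + TI α β γ) / 2 : ℝ) : ℂ) +
      (((XI α β γ - TR α β γ) / 2 : ℝ) : ℂ) * Complex.I := by
    intro α β
    simp only [dW]
    rw [hXgF, hTgF]
    push_cast
    linear_combination (-((TI α β γ : ℝ) : ℂ) / 2) * Complex.I_sq
  -- symmetry relations from hermiticity
  have hXRs : ∀ c i j : Fin n, XR c i j = XR c j i := by
    intro c i j
    rw [← hXR c i j, ← hXR c j i, DualAux.dX_conj g hherm c i j (z σ), Complex.conj_re]
  have hXIs : ∀ c i j : Fin n, XI c i j = -XI c j i := by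
    intro c i j
    rw [← hXI c i j, ← hXI c j i, DualAux.dX_conj g hherm c i j (z σ), Complex.conj_im]
  have hTRs : ∀ c i j : Fin n, TR c i j = TR c j i := by
    intro c i j
    rw [← hTR c i j, ← hTR c j i, DualAux.dT_conj g hherm c i j (z σ), Complex.conj_re]
  have hTIs : ∀ c i j : Fin n, TI c i j = -TI c j i := by
    intro c i j
    rw [← hTI c i j, ← hTI c j i, DualAux.dT_conj g hherm c i j (z σ), Complex.conj_im]
  -- take the real part of the geodesic equation
  have h := hgeo γ σ
  simp only [hA, hB, hgentry, hD2z, hDzc] at h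
  simp only [hDz] at h
  have hre := congrArg Complex.re h
  simp only [Complex.re_sum, Complex.sub_re, DualAux.re2, DualAux.re3] at hre
  -- rewrite the goal in terms of the real atoms
  have hPhiPP : ∀ α β : Fin n, PhiPP g γ α β (z σ) =
      (((XR γ α β - XR α β γ - XR β α γ) / 2 : ℝ) : ℂ) := by
    intro α β
    unfold PhiPP
    rw [DualAux.dX_gR_eq g hg, DualAux.dX_gR_eq g hg, DualAux.dX_gR_eq g hg, hXR, hXR, hXR]
    push_cast
    ring
  have hco2 : ∀ α β : Fin n, dX γ (gR g α β) (z σ) / 2 - PhiMM g γ α β (z σ) =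
      ((XR γ α β / 2 - (TI γ α β - TI α β γ - TI β α γ) / 2 : ℝ) : ℂ) := by
    intro α β
    unfold PhiMM
    rw [DualAux.dX_gR_eq g hg, DualAux.dT_gI_eq g hg, DualAux.dT_gI_eq g hg, DualAux.dT_gI_eq g hg, hXR, hTI, hTI, hTI]
    push_cast
    ring
  have hco3 : ∀ α β : Fin n, Fx g α γ β (z σ) + dT α (gR g β γ) (z σ) =
      ((XI γ α β - XI β α γ + TR α β γ : ℝ) : ℂ) := by
    intro α β
    unfold Fx
    rw [DualAux.dX_gI_eq g hg, DualAux.dX_gI_eq g hg, DualAux.dT_gR_eq g hg, hXI, hXI, hTR]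
    push_cast
    ring
  have hgRv : ∀ μ : Fin n, gR g μ γ (z σ) = ((Rf μ γ : ℝ) : ℂ) := by
    intro μ
    rw [← hRf μ γ]
    rfl
  have hgIv : ∀ μ : Fin n, gI g μ γ (z σ) = ((Sf μ γ : ℝ) : ℂ) := by
    intro μ
    rw [← hSf μ γ]
    rfl
  simp only [hgRv, hgIv, hp, hq, hu, hv, hPhiPP, hco2, hco3]
  -- the remaining statement is a purely real identity
  have key : (∑ μ, Rf μ γ * p μ) - (∑ μ, Sf μ γ * q μ) =
      ((∑ α, ∑ β, (XR γ α β - XR α β γ - XR β α γ) / 2 * u α * u β) +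
        ∑ α, ∑ β, (XR γ α β / 2 - (TI γ α β - TI α β γ - TI β α γ) / 2) * v α * v β) -
      ∑ α, ∑ β, (XI γ α β - XI β α γ + TR α β γ) * v α * u β := by
    have hL1 : (∑ μ, Rf μ γ * p μ) - (∑ μ, Sf μ γ * q μ) =
        ∑ μ, (Rf μ γ * p μ - Sf μ γ * q μ) := by rw [Finset.sum_sub_distrib]
    have hE : (∑ μ, (Rf μ γ * p μ - Sf μ γ * q μ)) = ∑ α, ∑ β,
        ((((XR γ α β - TI γ α β - XR β α γ + TI β α γ) / 2 * u α -
            (XI γ α β + TR γ α β - XI β α γ - TR β α γ) / 2 * v α) * u β -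
          ((XR γ α β - TI γ α β - XR β α γ + TI β α γ) / 2 * v α +
            (XI γ α β + TR γ α β - XI β α γ - TR β α γ) / 2 * u α) * (-(v β))) -
          (((XR α β γ + TI α β γ) / 2 * u α - (XI α β γ - TR α β γ) / 2 * v α) * u β -
            ((XR α β γ + TI α β γ) / 2 * v α + (XI α β γ - TR α β γ) / 2 * u α) * v β)) := by
      rw [hre, ← Finset.sum_sub_distrib]
      refine Finset.sum_congr rfl fun a _ => ?_
      rw [← Finset.sum_sub_distrib]
      try exact Finset.sum_congr rfl fun b _ => by ring
    have hEG : (∑ α, ∑ β,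
        ((((XR γ α β - TI γ α β - XR β α γ + TI β α γ) / 2 * u α -
            (XI γ α β + TR γ α β - XI β α γ - TR β α γ) / 2 * v α) * u β -
          ((XR γ α β - TI γ α β - XR β α γ + TI β α γ) / 2 * v α +
            (XI γ α β + TR γ α β - XI β α γ - TR β α γ) / 2 * u α) * (-(v β))) -
          (((XR α β γ + TI α β γ) / 2 * u α - (XI α β γ - TR α β γ) / 2 * v α) * u β -
            ((XR α β γ + TI α β γ) / 2 * v α + (XI α β γ - TR α β γ) / 2 * u α) * v β))) =
        ∑ α, ∑ β, ((XR γ α β - XR α β γ - XR β α γ) / 2 * u α * u β +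
          (XR γ α β / 2 - (TI γ α β - TI α β γ - TI β α γ) / 2) * v α * v β -
          (XI γ α β - XI β α γ + TR α β γ) * v α * u β) := by
      rw [← sub_eq_zero]
      have hmerge : (∑ α, ∑ β,
          ((((XR γ α β - TI γ α β - XR β α γ + TI β α γ) / 2 * u α -
              (XI γ α β + TR γ α β - XI β α γ - TR β α γ) / 2 * v α) * u β -
            ((XR γ α β - TI γ α β - XR β α γ + TI β α γ) / 2 * v α +
              (XI γ α β + TR γ α β - XI β α γ - TR β α γ) / 2 * u α) * (-(v β))) -
            (((XR α β γ + TI α β γ) / 2 * u α - (XI α β γ - TR α β γ) / 2 * v α) * u β -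
              ((XR α β γ + TI α β γ) / 2 * v α + (XI α β γ - TR α β γ) / 2 * u α) * v β))) -
          (∑ α, ∑ β, ((XR γ α β - XR α β γ - XR β α γ) / 2 * u α * u β +
            (XR γ α β / 2 - (TI γ α β - TI α β γ - TI β α γ) / 2) * v α * v β -
            (XI γ α β - XI β α γ + TR α β γ) * v α * u β)) =
          ∑ α, ∑ β,
          (((((XR γ α β - TI γ α β - XR β α γ + TI β α γ) / 2 * u α -
              (XI γ α β + TR γ α β - XI β α γ - TR β α γ) / 2 * v α) * u β -
            ((XR γ α β - TI γ α β - XR β α γ + TI β α γ) / 2 * v α +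
              (XI γ α β + TR γ α β - XI β α γ - TR β α γ) / 2 * u α) * (-(v β))) -
            (((XR α β γ + TI α β γ) / 2 * u α - (XI α β γ - TR α β γ) / 2 * v α) * u β -
              ((XR α β γ + TI α β γ) / 2 * v α + (XI α β γ - TR α β γ) / 2 * u α) * v β)) -
          ((XR γ α β - XR α β γ - XR β α γ) / 2 * u α * u β +
            (XR γ α β / 2 - (TI γ α β - TI α β γ - TI β α γ) / 2) * v α * v β -
            (XI γ α β - XI β α γ + TR α β γ) * v α * u β)) := by
        rw [← Finset.sum_sub_distrib]
        try exact Finset.sum_congr rfl fun a _ => by simp only [Finset.sum_sub_distrib]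
      rw [hmerge]
      apply DualAux.sum_antisym_zero
      intro a b
      simp only [hXRs γ b a, hXIs γ b a, hTRs γ b a, hTIs γ b a]
      ring
    rw [hL1, hE, hEG]
    refine Eq.symm ?_
    rw [← Finset.sum_add_distrib, ← Finset.sum_sub_distrib]
    refine Finset.sum_congr rfl fun a _ => ?_
    rw [← Finset.sum_add_distrib, ← Finset.sum_sub_distrib]
  exact_mod_cast key
end
end

section
/- (Theorem 2: the real projective geodesic equation.) Let g be a pointwise-hermitian, positive-definite C¹ metric on ℂⁿ with g = g^R + i·g^I (so g^R is symmetric positive definite, hence invertible), and let z = x + it : ℝ → ℂⁿ be a C² curve with L(σ) > 0 satisfying the complex geodesic equation. Define the link tensor ε^η_γ = Σ_ν g^I_{νγ̄}·((g^R)⁻¹)_{νη} and the symbols Υ^{(1,1)}_{γαβ} = Φ^{γ++}_{αβ} + Σ_η ε^η_γ·(Φ^{η+-}_{αβ} + ½·∂^t_η g^R_{αβ̄}), Υ^{(1,0)}_{γαβ} = F^x_{αγβ} + ∂^t_α g^R_{βγ̄} + Σ_η ε^η_γ·(∂^x_β g^R_{αη̄} − F^t_{βηα}), and Υ^{(0,0)}_{γαβ}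 = Φ^{γ--}_{αβ} − ½·∂^x_γ g^R_{αβ̄} − Σ_η ε^η_γ·Φ^{η-+}_{αβ}. Then for every index γ and every σ: Σ_μ (g^R_{μγ̄} + Σ_η ε^η_γ·g^I_{μη̄}) D²x^μ = Σ_{α,β} Υ^{(1,1)}_{γαβ} Dx^α Dx^β − Σ_{α,β} Υ^{(1,0)}_{γαβ} Dt^α Dx^β − Σ_{α,β} Υ^{(0,0)}_{γαβ} Dt^α Dt^β, all coefficient functions evaluated at z(σ). -/
open Complex
open scoped ComplexOrder

noncomputable section

/-- `Υ^{(1,1)}_{γαβ}`. -/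
def Ups11 {n : ℕ} (g : (Fin n → ℂ) → Matrix (Fin n) (Fin n) ℂ) (γ α β : Fin n)
    (z : Fin n → ℂ) : ℂ :=
  PhiPP g γ α β z +
    ∑ η, (eps g z η γ : ℂ) * (PhiPM g η α β z + dT η (gR g α β) z / 2)

/-- `Υ^{(1,0)}_{γαβ}`. -/
def Ups10 {n : ℕ} (g : (Fin n → ℂ) → Matrix (Fin n) (Fin n) ℂ) (γ α β : Fin n)
    (z : Fin n → ℂ) : ℂ :=
  Fx g α γ β z + dT α (gR g β γ) z +
    ∑ η, (eps g z η γ : ℂ) * (dX β (gR g α η) z - Ft g β η α z)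

/-- `Υ^{(0,0)}_{γαβ}`. -/
def Ups00 {n : ℕ} (g : (Fin n → ℂ) → Matrix (Fin n) (Fin n) ℂ) (γ α β : Fin n)
    (z : Fin n → ℂ) : ℂ :=
  PhiMM g γ α β z - dX γ (gR g α β) z / 2 -
    ∑ η, (eps g z η γ : ℂ) * PhiMP g η α β z

/-- deriv of coerced real function. -/
lemma deriv_ofReal_comp (f : ℝ → ℝ) (t : ℝ) :
    deriv (fun x => ((f x : ℝ) : ℂ)) t = ((deriv f t : ℝ) : ℂ) := by
  by_cases h : DifferentiableAt ℝ f t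
  · exact (h.hasDerivAt.ofReal_comp).deriv
  · rw [deriv_zero_of_not_differentiableAt h, deriv_zero_of_not_differentiableAt, ofReal_zero]
    intro h2
    exact h ((Complex.reCLM.differentiableAt (x := ((f t : ℝ) : ℂ))).comp t h2
      |>.congr_of_eventuallyEq (Filter.Eventually.of_forall fun x => by simp))

/-- re/im decomposition of deriv of ℝ → ℂ function. -/
lemma deriv_decomp (f : ℝ → ℂ) (t : ℝ) (hf : DifferentiableAt ℝ f t) :
    deriv f t = ((deriv (fun x => (f x).re) t : ℝ) : ℂ)
      + Complex.I * ((deriv (fun x => (f x).im) t : ℝ) : ℂ) := by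
  have hre : HasDerivAt (fun x => (f x).re) (deriv f t).re t :=
    (Complex.reCLM.hasFDerivAt.restrictScalars ℝ).comp_hasDerivAt t hf.hasDerivAt
  have him : HasDerivAt (fun x => (f x).im) (deriv f t).im t :=
    (Complex.imCLM.hasFDerivAt.restrictScalars ℝ).comp_hasDerivAt t hf.hasDerivAt
  rw [hre.deriv, him.deriv]
  rw [mul_comm]
  exact_mod_cast (Complex.re_add_im (deriv f t)).symm

section KeyReal
variable {n : ℕ} (xr xi tr ti : Fin n → Fin n → Fin n → ℝ) (u v e : Fin n → ℝ) (γ : Fin n)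

def PreF (c a b : Fin n) : ℝ :=
  ((xr c a b - ti c a b - (xr b a c - ti b a c))/2) * (u a * u b + v a * v b)
  - ((xi c a b + tr c a b - (xi b a c + tr b a c))/2) * (v a * u b - u a * v b)
  - (((xr a b c + ti a b c)/2) * (u a * u b - v a * v b)
     - ((xi a b c - tr a b c)/2) * (v a * u b + u a * v b))

def PimF (c a b : Fin n) : ℝ :=
  ((xi c a b + tr c a b - (xi b a c + tr b a c))/2) * (u a * u b + v a * v b)
  + ((xr c a b - ti c a b - (xr b a c - ti b a c))/2) * (v a * u b - u a * v b)
  - (((xi a b c - tr a b c)/2) * (u a * u b - v a * v b)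
     + ((xr a b c + ti a b c)/2) * (v a * u b + u a * v b))

def T0F (a b : Fin n) : ℝ :=
  ((xr γ a b - xr a b γ - xr b a γ)/2) * (u a * u b)
  - ((xi γ a b - xi b a γ) + tr a b γ) * (v a * u b)
  - ((ti γ a b - ti a b γ - ti b a γ)/2 - xr γ a b / 2) * (v a * v b)

def T1F (η a b : Fin n) : ℝ :=
  ((xi η a b - xi a b η - xi b a η)/2 + tr η a b / 2) * (u a * u b)
  - (xr b a η - (ti η b a - ti a b η)) * (v a * u b)
  - (-((tr η a b - tr a b η - tr b a η)/2)) * (v a * v b)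

lemma sum_swap_eq {f h : Fin n → Fin n → ℝ}
    (hfh : ∀ a b, f a b + f b a = h a b + h b a) :
    ∑ a, ∑ b, f a b = ∑ a, ∑ b, h a b := by
  have hsf : (∑ a, ∑ b, f b a) = ∑ a, ∑ b, f a b := Finset.sum_comm
  have hsh : (∑ a, ∑ b, h b a) = ∑ a, ∑ b, h a b := Finset.sum_comm
  have hkey : (∑ a, ∑ b, (f a b + f b a)) = ∑ a, ∑ b, (h a b + h b a) :=
    Finset.sum_congr rfl fun a _ => Finset.sum_congr rfl fun b _ => hfh a b
  have hf2 : (∑ a, ∑ b, (f a b + f b a)) = (∑ a, ∑ b, f a b) + (∑ a, ∑ b, f b a) := by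
    simp [Finset.sum_add_distrib]
  have hh2 : (∑ a, ∑ b, (h a b + h b a)) = (∑ a, ∑ b, h a b) + (∑ a, ∑ b, h b a) := by
    simp [Finset.sum_add_distrib]
  linarith

variable (hxr : ∀ c a b, xr c a b = xr c b a) (hxi : ∀ c a b, xi c a b = - xi c b a)
  (htr : ∀ c a b, tr c a b = tr c b a) (hti : ∀ c a b, ti c a b = - ti c b a)

include hxr hxi htr hti in
lemma L1 (a b : Fin n) :
    T0F xr xi tr ti u v γ a b + T0F xr xi tr ti u v γ b a
      = PreF xr xi tr ti u v γ a b + PreF xr xi tr ti u v γ b a := by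
  simp only [T0F, PreF]
  rw [hxr γ b a, hxi γ b a, htr γ b a, hti γ b a]
  ring

include hxr hxi htr hti in
lemma L2 (η a b : Fin n) :
    T1F xr xi tr ti u v η a b + T1F xr xi tr ti u v η b a
      = PimF xr xi tr ti u v η a b + PimF xr xi tr ti u v η b a := by
  simp only [T1F, PimF]
  rw [hxr η b a, hxi η b a, htr η b a, hti η b a]
  ring

include hxr hxi htr hti in
lemma key_real :
    ((∑ a, ∑ b, (T0F xr xi tr ti u v γ a b + ∑ η, e η * T1F xr xi tr ti u v η a b)) : ℝ)
      = (∑ a, ∑ b, PreF xr xi tr ti u v γ a b)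
        + ∑ η, e η * ∑ a, ∑ b, PimF xr xi tr ti u v η a b := by
  have hE2 : (∑ a, ∑ b, ∑ η, e η * T1F xr xi tr ti u v η a b)
      = ∑ a, ∑ b, ∑ η, e η * PimF xr xi tr ti u v η a b := by
    apply sum_swap_eq
    intro a b
    rw [← Finset.sum_add_distrib, ← Finset.sum_add_distrib]
    apply Finset.sum_congr rfl; intro η _
    linear_combination e η * L2 xr xi tr ti u v hxr hxi htr hti η a b
  have hE1 : (∑ a, ∑ b, T0F xr xi tr ti u v γ a b)
      = ∑ a, ∑ b, PreF xr xi tr ti u v γ a b :=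
    sum_swap_eq (L1 xr xi tr ti u v γ hxr hxi htr hti)
  have hswap : (∑ η, e η * ∑ a, ∑ b, PimF xr xi tr ti u v η a b)
      = ∑ a, ∑ b, ∑ η, e η * PimF xr xi tr ti u v η a b := by
    simp only [Finset.mul_sum]
    rw [Finset.sum_comm]
    apply Finset.sum_congr rfl; intro a _
    rw [Finset.sum_comm]
  rw [hswap, ← hE2, ← hE1]
  rw [← Finset.sum_add_distrib]
  apply Finset.sum_congr rfl; intro a _
  rw [← Finset.sum_add_distrib]
end KeyReal

open Complex in
lemma complex_split {n : ℕ} (F : Fin n → Fin n → ℂ) (p q : Fin n → Fin n → ℝ)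
    (h : ∀ a b, F a b = ((p a b : ℝ) : ℂ) + Complex.I * ((q a b : ℝ) : ℂ)) :
    (∑ a, ∑ b, F a b)
      = (((∑ a, ∑ b, p a b : ℝ)) : ℂ) + Complex.I * ((∑ a, ∑ b, q a b : ℝ) : ℂ) := by
  push_cast
  rw [Finset.mul_sum]
  rw [← Finset.sum_add_distrib]
  apply Finset.sum_congr rfl; intro a _
  rw [Finset.mul_sum, ← Finset.sum_add_distrib]
  exact Finset.sum_congr rfl fun b _ => h a b

open Complex in
lemma re_combo (X Y : ℝ) : ((((X:ℂ) + I*Y) + ((X:ℂ) - I*Y)))/2 = (X:ℂ) := by ring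

open Complex in
lemma im_combo (X Y : ℝ) : ((((X:ℂ) + I*Y) - ((X:ℂ) - I*Y)))/(2*I) = (Y:ℂ) := by
  have hI : (2 * I : ℂ) ≠ 0 := by simp [Complex.I_ne_zero]
  field_simp
  ring

open Complex in
lemma term_split {n : ℕ} (xr xi tr ti : Fin n → Fin n → Fin n → ℝ) (u v : Fin n → ℝ)
    (c a b : Fin n) :
    ((((xr c a b : ℝ):ℂ) + I*((xi c a b : ℝ):ℂ) + I*(((tr c a b : ℝ):ℂ) + I*((ti c a b : ℝ):ℂ)))/2
      - (((xr b a c : ℝ):ℂ) + I*((xi b a c : ℝ):ℂ) + I*(((tr b a c : ℝ):ℂ) + I*((ti b a c : ℝ):ℂ)))/2)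
      * (((u a : ℝ):ℂ) + I*((v a : ℝ):ℂ)) * (((u b : ℝ):ℂ) - I*((v b : ℝ):ℂ))
    - ((((xr a b c : ℝ):ℂ) + I*((xi a b c : ℝ):ℂ) - I*(((tr a b c : ℝ):ℂ) + I*((ti a b c : ℝ):ℂ)))/2)
      * (((u a : ℝ):ℂ) + I*((v a : ℝ):ℂ)) * (((u b : ℝ):ℂ) + I*((v b : ℝ):ℂ))
    = ((PreF xr xi tr ti u v c a b : ℝ) : ℂ)
      + I * ((PimF xr xi tr ti u v c a b : ℝ) : ℂ) := by
  simp only [PreF, PimF]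
  push_cast
  simp only [Complex.ext_iff, Complex.add_re, Complex.add_im, Complex.sub_re, Complex.sub_im,
    Complex.mul_re, Complex.mul_im, Complex.I_re, Complex.I_im, Complex.ofReal_re,
    Complex.ofReal_im, Complex.div_re, Complex.div_im, Complex.normSq_ofNat,
    Complex.neg_re, Complex.neg_im]
  norm_num
  constructor <;> ring

open Complex in
lemma key_complex {n : ℕ} (xr xi tr ti : Fin n → Fin n → Fin n → ℝ) (u v e : Fin n → ℝ)
    (γ : Fin n)
    (hxr : ∀ c a b, xr c a b = xr c b a) (hxi : ∀ c a b, xi c a b = - xi c b a)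
    (htr : ∀ c a b, tr c a b = tr c b a) (hti : ∀ c a b, ti c a b = - ti c b a)
    (P : Fin n → ℂ)
    (hP : ∀ c, P c =
      (∑ a, ∑ b,
        ((((xr c a b : ℝ):ℂ) + I*((xi c a b : ℝ):ℂ) + I*(((tr c a b : ℝ):ℂ) + I*((ti c a b : ℝ):ℂ)))/2
          - (((xr b a c : ℝ):ℂ) + I*((xi b a c : ℝ):ℂ) + I*(((tr b a c : ℝ):ℂ) + I*((ti b a c : ℝ):ℂ)))/2)
          * (((u a : ℝ):ℂ) + I*((v a : ℝ):ℂ)) * (((u b : ℝ):ℂ) - I*((v b : ℝ):ℂ)))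
      - ∑ a, ∑ b,
        ((((xr a b c : ℝ):ℂ) + I*((xi a b c : ℝ):ℂ) - I*(((tr a b c : ℝ):ℂ) + I*((ti a b c : ℝ):ℂ)))/2)
          * (((u a : ℝ):ℂ) + I*((v a : ℝ):ℂ)) * (((u b : ℝ):ℂ) + I*((v b : ℝ):ℂ))) :
    (∑ a, ∑ b,
      ((((xr γ a b : ℝ):ℂ) - ((xr a b γ : ℝ):ℂ) - ((xr b a γ : ℝ):ℂ))/2
        + ∑ η, ((e η : ℝ):ℂ) *
          (((((xi η a b : ℝ):ℂ) - ((xi a b η : ℝ):ℂ) - ((xi b a η : ℝ):ℂ))/2) + ((tr η a b : ℝ):ℂ)/2))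
        * ((u a : ℝ):ℂ) * ((u b : ℝ):ℂ))
    - (∑ a, ∑ b,
      (((xi γ a b : ℝ):ℂ) - ((xi b a γ : ℝ):ℂ) + ((tr a b γ : ℝ):ℂ)
        + ∑ η, ((e η : ℝ):ℂ) *
          (((xr b a η : ℝ):ℂ) - (((ti η b a : ℝ):ℂ) - ((ti a b η : ℝ):ℂ))))
        * ((v a : ℝ):ℂ) * ((u b : ℝ):ℂ))
    - ∑ a, ∑ b,
      (((((ti γ a b : ℝ):ℂ) - ((ti a b γ : ℝ):ℂ) - ((ti b a γ : ℝ):ℂ))/2) - ((xr γ a b : ℝ):ℂ)/2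
        - ∑ η, ((e η : ℝ):ℂ) *
          ((((tr η a b : ℝ):ℂ) - ((tr a b η : ℝ):ℂ) - ((tr b a η : ℝ):ℂ))/2))
        * ((v a : ℝ):ℂ) * ((v b : ℝ):ℂ)
    = (P γ + (starRingEnd ℂ) (P γ))/2 + ∑ η, ((e η : ℝ):ℂ) * ((P η - (starRingEnd ℂ) (P η))/(2*I)) := by
  -- decompose P c
  have hPdec : ∀ c, P c = ((∑ a, ∑ b, PreF xr xi tr ti u v c a b : ℝ) : ℂ)
      + I * ((∑ a, ∑ b, PimF xr xi tr ti u v c a b : ℝ) : ℂ) := by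
    intro c
    rw [hP c, ← Finset.sum_sub_distrib]
    simp only [← Finset.sum_sub_distrib]
    exact complex_split _ _ _ (fun a b => term_split xr xi tr ti u v c a b)
  have hPconj : ∀ c, (starRingEnd ℂ) (P c) = ((∑ a, ∑ b, PreF xr xi tr ti u v c a b : ℝ) : ℂ)
      - I * ((∑ a, ∑ b, PimF xr xi tr ti u v c a b : ℝ) : ℂ) := by
    intro c
    rw [hPdec c]
    simp [Complex.conj_ofReal, sub_eq_add_neg]
  -- RHS simplifies
  have hrhs : (P γ + (starRingEnd ℂ) (P γ))/2 + ∑ η, ((e η : ℝ):ℂ) * ((P η - (starRingEnd ℂ) (P η))/(2*I))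
      = ((∑ a, ∑ b, PreF xr xi tr ti u v γ a b : ℝ) : ℂ)
        + ∑ η, ((e η : ℝ):ℂ) * ((∑ a, ∑ b, PimF xr xi tr ti u v η a b : ℝ) : ℂ) := by
    rw [hPconj γ, hPdec γ, re_combo]
    congr 1
    apply Finset.sum_congr rfl; intro η _
    rw [hPconj η, hPdec η]
    rw [show ((∑ a, ∑ b, PreF xr xi tr ti u v η a b : ℝ) : ℂ)
      + I * ((∑ a, ∑ b, PimF xr xi tr ti u v η a b : ℝ) : ℂ)
      - (((∑ a, ∑ b, PreF xr xi tr ti u v η a b : ℝ) : ℂ)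
      - I * ((∑ a, ∑ b, PimF xr xi tr ti u v η a b : ℝ) : ℂ)) = 2*I*((∑ a, ∑ b, PimF xr xi tr ti u v η a b : ℝ) : ℂ) from by ring]
    rw [mul_div_cancel_left₀ _ (by simp [Complex.I_ne_zero] : (2*I:ℂ) ≠ 0)]
  rw [hrhs]
  -- LHS: collapse casts and use key_real
  have hlhs : (∑ a, ∑ b,
      ((((xr γ a b : ℝ):ℂ) - ((xr a b γ : ℝ):ℂ) - ((xr b a γ : ℝ):ℂ))/2
        + ∑ η, ((e η : ℝ):ℂ) *
          (((((xi η a b : ℝ):ℂ) - ((xi a b η : ℝ):ℂ) - ((xi b a η : ℝ):ℂ))/2) + ((tr η a b : ℝ):ℂ)/2))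
        * ((u a : ℝ):ℂ) * ((u b : ℝ):ℂ))
    - (∑ a, ∑ b,
      (((xi γ a b : ℝ):ℂ) - ((xi b a γ : ℝ):ℂ) + ((tr a b γ : ℝ):ℂ)
        + ∑ η, ((e η : ℝ):ℂ) *
          (((xr b a η : ℝ):ℂ) - (((ti η b a : ℝ):ℂ) - ((ti a b η : ℝ):ℂ))))
        * ((v a : ℝ):ℂ) * ((u b : ℝ):ℂ))
    - ∑ a, ∑ b,
      (((((ti γ a b : ℝ):ℂ) - ((ti a b γ : ℝ):ℂ) - ((ti b a γ : ℝ):ℂ))/2) - ((xr γ a b : ℝ):ℂ)/2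
        - ∑ η, ((e η : ℝ):ℂ) *
          ((((tr η a b : ℝ):ℂ) - ((tr a b η : ℝ):ℂ) - ((tr b a η : ℝ):ℂ))/2))
        * ((v a : ℝ):ℂ) * ((v b : ℝ):ℂ)
    = ((∑ a, ∑ b, (T0F xr xi tr ti u v γ a b + ∑ η, e η * T1F xr xi tr ti u v η a b) : ℝ) : ℂ) := by
    push_cast
    rw [← Finset.sum_sub_distrib, ← Finset.sum_sub_distrib]
    apply Finset.sum_congr rfl; intro a _
    rw [← Finset.sum_sub_distrib, ← Finset.sum_sub_distrib]
    apply Finset.sum_congr rfl; intro b _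
    have eta_split : ∀ (f1 f2 f3 : Fin n → ℂ) (X Y Z : ℂ),
        (∑ η, (f1 η * X - f2 η * Y + f3 η * Z))
          = (∑ η, f1 η) * X - (∑ η, f2 η) * Y + (∑ η, f3 η) * Z := by
      intro f1 f2 f3 X Y Z
      rw [Finset.sum_mul, Finset.sum_mul, Finset.sum_mul, ← Finset.sum_sub_distrib,
        ← Finset.sum_add_distrib]
    have hT1 : ∀ η, ((e η : ℝ) : ℂ) * ((T1F xr xi tr ti u v η a b : ℝ) : ℂ)
        = (((e η : ℝ):ℂ) * (((((xi η a b : ℝ):ℂ) - ((xi a b η : ℝ):ℂ) - ((xi b a η : ℝ):ℂ))/2) + ((tr η a b : ℝ):ℂ)/2))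
            * (((u a : ℝ):ℂ) * ((u b : ℝ):ℂ))
          - (((e η : ℝ):ℂ) * (((xr b a η : ℝ):ℂ) - (((ti η b a : ℝ):ℂ) - ((ti a b η : ℝ):ℂ))))
            * (((v a : ℝ):ℂ) * ((u b : ℝ):ℂ))
          + (((e η : ℝ):ℂ) * ((((tr η a b : ℝ):ℂ) - ((tr a b η : ℝ):ℂ) - ((tr b a η : ℝ):ℂ))/2))
            * (((v a : ℝ):ℂ) * ((v b : ℝ):ℂ)) := by
      intro η
      simp only [T1F]
      push_cast
      ring
    simp only [hT1]
    rw [eta_split]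
    simp only [T0F]
    push_cast
    ring
  rw [hlhs]
  exact_mod_cast key_real xr xi tr ti u v e γ hxr hxi htr hti

open Complex in
lemma complex_split1 {n : ℕ} (F : Fin n → ℂ) (p q : Fin n → ℝ)
    (h : ∀ a, F a = ((p a : ℝ) : ℂ) + Complex.I * ((q a : ℝ) : ℂ)) :
    (∑ a, F a) = (((∑ a, p a : ℝ)) : ℂ) + Complex.I * ((∑ a, q a : ℝ) : ℂ) := by
  push_cast
  rw [Finset.mul_sum, ← Finset.sum_add_distrib]
  exact Finset.sum_congr rfl fun a _ => h a

open Complex in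
lemma lhs_combo {n : ℕ} (GR GI : Fin n → Fin n → ℝ) (e d2x d2t : Fin n → ℝ) (γ : Fin n)
    (hlink : ∀ μ, ∑ η, e η * GR μ η = GI μ γ)
    (L : Fin n → ℂ)
    (hLc : ∀ c, L c = ∑ μ, (((GR μ c : ℝ):ℂ) + I * ((GI μ c : ℝ):ℂ))
      * (((d2x μ : ℝ):ℂ) + I * ((d2t μ : ℝ):ℂ))) :
    ∑ μ, (((GR μ γ : ℝ):ℂ) + ∑ η, ((e η : ℝ):ℂ) * ((GI μ η : ℝ):ℂ)) * ((d2x μ : ℝ):ℂ)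
      = (L γ + (starRingEnd ℂ) (L γ))/2
        + ∑ η, ((e η : ℝ):ℂ) * ((L η - (starRingEnd ℂ) (L η))/(2*I)) := by
  have hdec : ∀ c, L c = ((∑ μ, (GR μ c * d2x μ - GI μ c * d2t μ) : ℝ) : ℂ)
      + I * ((∑ μ, (GI μ c * d2x μ + GR μ c * d2t μ) : ℝ) : ℂ) := by
    intro c
    rw [hLc c]
    apply complex_split1
    intro a
    push_cast
    simp only [Complex.ext_iff, Complex.add_re, Complex.add_im, Complex.sub_re, Complex.sub_im,
      Complex.mul_re, Complex.mul_im, Complex.I_re, Complex.I_im, Complex.ofReal_re,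
      Complex.ofReal_im]
    constructor <;> ring
  have hconj : ∀ c, (starRingEnd ℂ) (L c) = ((∑ μ, (GR μ c * d2x μ - GI μ c * d2t μ) : ℝ) : ℂ)
      - I * ((∑ μ, (GI μ c * d2x μ + GR μ c * d2t μ) : ℝ) : ℂ) := by
    intro c
    rw [hdec c]
    simp [Complex.conj_ofReal, sub_eq_add_neg]
  have h1 : (L γ + (starRingEnd ℂ) (L γ))/2
      = ((∑ μ, (GR μ γ * d2x μ - GI μ γ * d2t μ) : ℝ) : ℂ) := by
    rw [hconj γ, hdec γ]; ring
  have h2 : ∀ η, ((L η - (starRingEnd ℂ) (L η))/(2*I))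
      = ((∑ μ, (GI μ η * d2x μ + GR μ η * d2t μ) : ℝ) : ℂ) := by
    intro η
    rw [hconj η, hdec η]
    rw [show ∀ (X Y : ℂ), (X + I*Y - (X - I*Y)) = 2*I*Y from fun X Y => by ring]
    exact mul_div_cancel_left₀ _ (by simp [Complex.I_ne_zero])
  simp only [h1, h2]
  have hreal : ∑ μ, ((GR μ γ + ∑ η, e η * GI μ η) * d2x μ)
      = (∑ μ, (GR μ γ * d2x μ - GI μ γ * d2t μ))
        + ∑ η, e η * ∑ μ, (GI μ η * d2x μ + GR μ η * d2t μ) := by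
    have hswap : (∑ η, e η * ∑ μ, (GI μ η * d2x μ + GR μ η * d2t μ))
        = ∑ μ, ∑ η, e η * (GI μ η * d2x μ + GR μ η * d2t μ) := by
      simp only [Finset.mul_sum]
      exact Finset.sum_comm
    rw [hswap, ← Finset.sum_add_distrib]
    apply Finset.sum_congr rfl
    intro μ _
    have hη : (∑ η, e η * (GI μ η * d2x μ + GR μ η * d2t μ))
        = (∑ η, e η * GI μ η) * d2x μ + GI μ γ * d2t μ := by
      rw [← hlink μ, Finset.sum_mul, Finset.sum_mul, ← Finset.sum_add_distrib]
      exact Finset.sum_congr rfl fun η _ => by ring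
    rw [hη, add_mul, Finset.sum_mul]
    ring
  exact_mod_cast hreal

open Complex

/-- x-direction path point -/
def ptX {n : ℕ} (w : Fin n → ℂ) (c : Fin n) (s : ℝ) : Fin n → ℂ :=
  fun i => w i + (s : ℂ) * eV n c i

def ptT {n : ℕ} (w : Fin n → ℂ) (c : Fin n) (s : ℝ) : Fin n → ℂ :=
  fun i => w i + (s : ℂ) * Complex.I * eV n c i

def xrAt {n : ℕ} (g : (Fin n → ℂ) → Matrix (Fin n) (Fin n) ℂ) (w : Fin n → ℂ)
    (c a b : Fin n) : ℝ := deriv (fun s : ℝ => (g (ptX w c s) a b).re) 0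
def xiAt {n : ℕ} (g : (Fin n → ℂ) → Matrix (Fin n) (Fin n) ℂ) (w : Fin n → ℂ)
    (c a b : Fin n) : ℝ := deriv (fun s : ℝ => (g (ptX w c s) a b).im) 0
def trAt {n : ℕ} (g : (Fin n → ℂ) → Matrix (Fin n) (Fin n) ℂ) (w : Fin n → ℂ)
    (c a b : Fin n) : ℝ := deriv (fun s : ℝ => (g (ptT w c s) a b).re) 0
def tiAt {n : ℕ} (g : (Fin n → ℂ) → Matrix (Fin n) (Fin n) ℂ) (w : Fin n → ℂ)
    (c a b : Fin n) : ℝ := deriv (fun s : ℝ => (g (ptT w c s) a b).im) 0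

lemma dX_gR_eq {n : ℕ} (g : (Fin n → ℂ) → Matrix (Fin n) (Fin n) ℂ) (w : Fin n → ℂ)
    (c a b : Fin n) : dX c (gR g a b) w = ((xrAt g w c a b : ℝ) : ℂ) :=
  deriv_ofReal_comp _ 0

lemma dX_gI_eq {n : ℕ} (g : (Fin n → ℂ) → Matrix (Fin n) (Fin n) ℂ) (w : Fin n → ℂ)
    (c a b : Fin n) : dX c (gI g a b) w = ((xiAt g w c a b : ℝ) : ℂ) :=
  deriv_ofReal_comp _ 0

lemma dT_gR_eq {n : ℕ} (g : (Fin n → ℂ) → Matrix (Fin n) (Fin n) ℂ) (w : Fin n → ℂ)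
    (c a b : Fin n) : dT c (gR g a b) w = ((trAt g w c a b : ℝ) : ℂ) :=
  deriv_ofReal_comp _ 0

lemma dT_gI_eq {n : ℕ} (g : (Fin n → ℂ) → Matrix (Fin n) (Fin n) ℂ) (w : Fin n → ℂ)
    (c a b : Fin n) : dT c (gI g a b) w = ((tiAt g w c a b : ℝ) : ℂ) :=
  deriv_ofReal_comp _ 0

lemma ptX_diff {n : ℕ} (w : Fin n → ℂ) (c : Fin n) :
    DifferentiableAt ℝ (fun s : ℝ => ptX w c s) 0 := by
  apply differentiableAt_pi.2
  intro i
  exact (differentiableAt_const _).add (Complex.ofRealCLM.differentiableAt.mul_const _)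

lemma ptT_diff {n : ℕ} (w : Fin n → ℂ) (c : Fin n) :
    DifferentiableAt ℝ (fun s : ℝ => ptT w c s) 0 := by
  apply differentiableAt_pi.2
  intro i
  exact (differentiableAt_const _).add
    ((Complex.ofRealCLM.differentiableAt.mul_const _).mul_const _)

lemma dX_gF_eq {n : ℕ} (g : (Fin n → ℂ) → Matrix (Fin n) (Fin n) ℂ) (hg : MetricC1 g)
    (w : Fin n → ℂ) (c a b : Fin n) :
    dX c (gF g a b) w = ((xrAt g w c a b : ℝ) : ℂ) + Complex.I * ((xiAt g w c a b : ℝ) : ℂ) :=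
  deriv_decomp _ 0 ((((hg a b).differentiable one_ne_zero) _).comp 0 (ptX_diff w c))

lemma dT_gF_eq {n : ℕ} (g : (Fin n → ℂ) → Matrix (Fin n) (Fin n) ℂ) (hg : MetricC1 g)
    (w : Fin n → ℂ) (c a b : Fin n) :
    dT c (gF g a b) w = ((trAt g w c a b : ℝ) : ℂ) + Complex.I * ((tiAt g w c a b : ℝ) : ℂ) :=
  deriv_decomp _ 0 ((((hg a b).differentiable one_ne_zero) _).comp 0 (ptT_diff w c))

section Sym
variable {n : ℕ} {g : (Fin n → ℂ) → Matrix (Fin n) (Fin n) ℂ}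
  (hherm : IsHermitianMetric g) (w : Fin n → ℂ)

include hherm

lemma xrAt_sym (c a b : Fin n) : xrAt g w c a b = xrAt g w c b a := by
  unfold xrAt
  congr 1
  funext s
  rw [hherm (ptX w c s) a b]
  simp

lemma trAt_sym (c a b : Fin n) : trAt g w c a b = trAt g w c b a := by
  unfold trAt
  congr 1
  funext s
  rw [hherm (ptT w c s) a b]
  simp

lemma xiAt_sym (c a b : Fin n) : xiAt g w c a b = - xiAt g w c b a := by
  unfold xiAt
  rw [show (fun s : ℝ => (g (ptX w c s) a b).im) = fun s => -((g (ptX w c s) b a).im) from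
    funext fun s => by rw [hherm (ptX w c s) a b]; simp]
  exact deriv.neg

lemma tiAt_sym (c a b : Fin n) : tiAt g w c a b = - tiAt g w c b a := by
  unfold tiAt
  rw [show (fun s : ℝ => (g (ptT w c s) a b).im) = fun s => -((g (ptT w c s) b a).im) from
    funext fun s => by rw [hherm (ptT w c s) a b]; simp]
  exact deriv.neg
end Sym

section Curve
variable {n : ℕ} (g : (Fin n → ℂ) → Matrix (Fin n) (Fin n) ℂ) (z : ℝ → Fin n → ℂ)

lemma coord_contDiff (hz : ContDiff ℝ 2 z) (a : Fin n) : ContDiff ℝ 2 (fun τ => z τ a) :=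
  (ContinuousLinearMap.proj (R := ℝ) (φ := fun _ : Fin n => ℂ) a).contDiff.comp hz

lemma coord_diff (hz : ContDiff ℝ 2 z) (a : Fin n) : Differentiable ℝ (fun τ => z τ a) :=
  (coord_contDiff z hz a).differentiable two_ne_zero

lemma coord_deriv_diff (hz : ContDiff ℝ 2 z) (a : Fin n) :
    Differentiable ℝ (deriv (fun τ => z τ a)) := by
  have h2 : ContDiff ℝ ((1:ℕ∞)+1) (fun τ => z τ a) :=
    (coord_contDiff z hz a).of_le (by norm_num)
  rw [contDiff_succ_iff_deriv] at h2
  exact h2.2.2.differentiable (by simp)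

lemma coord_deriv_decomp (hz : ContDiff ℝ 2 z) (a : Fin n) (τ : ℝ) :
    deriv (fun s => z s a) τ = ((deriv (fun s => (z s a).re) τ : ℝ) : ℂ)
      + Complex.I * ((deriv (fun s => (z s a).im) τ : ℝ) : ℂ) :=
  deriv_decomp _ τ (coord_diff z hz a τ)

lemma Dz_decomp (hz : ContDiff ℝ 2 z) (a : Fin n) (σ : ℝ) :
    Dz g z a σ = ((Dx g z a σ : ℝ) : ℂ) + Complex.I * ((Dt g z a σ : ℝ) : ℂ) := by
  unfold Dz Dx Dt
  rw [coord_deriv_decomp z hz a σ]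
  push_cast
  ring

lemma curveL_diff (hg : MetricC1 g) (hz : ContDiff ℝ 2 z)
    (hL : ∀ σ, 0 < curveL g z σ) (σ : ℝ) :
    DifferentiableAt ℝ (curveL g z) σ := by
  have hQd : DifferentiableAt ℝ (fun τ =>
      (∑ α, ∑ β, g (z τ) α β * deriv (fun s => z s α) τ
        * (starRingEnd ℂ) (deriv (fun s => z s β) τ)).re) σ := by
    apply (Complex.reCLM.differentiable.differentiableAt).comp
    apply DifferentiableAt.fun_sum
    intro α _
    apply DifferentiableAt.fun_sum
    intro β _
    have h1 : DifferentiableAt ℝ (fun τ => g (z τ) α β) σ :=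
      (((hg α β).differentiable one_ne_zero) _).comp σ ((hz.differentiable two_ne_zero) σ)
    have h2 : DifferentiableAt ℝ (fun τ => deriv (fun s => z s α) τ) σ :=
      coord_deriv_diff z hz α σ
    have h3 : DifferentiableAt ℝ (fun τ => (starRingEnd ℂ) (deriv (fun s => z s β) τ)) σ :=
      (coord_deriv_diff z hz β σ).star
    exact (h1.mul h2).mul h3
  have hQpos : 0 < (∑ α, ∑ β, g (z σ) α β * deriv (fun s => z s α) σ
      * (starRingEnd ℂ) (deriv (fun s => z s β) σ)).re := by
    have := hL σ
    rw [show curveL g z σ = Real.sqrt ((∑ α, ∑ β, g (z σ) α β * deriv (fun s => z s α) σ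
      * (starRingEnd ℂ) (deriv (fun s => z s β) σ)).re) from rfl] at this
    exact Real.sqrt_pos.mp this
  have : DifferentiableAt ℝ (fun τ => Real.sqrt ((∑ α, ∑ β, g (z τ) α β
      * deriv (fun s => z s α) τ * (starRingEnd ℂ) (deriv (fun s => z s β) τ)).re)) σ :=
    ((Real.hasStrictDerivAt_sqrt hQpos.ne').hasDerivAt.differentiableAt.restrictScalars ℝ).comp σ hQd
  exact this
end Curve

section Curve2
variable {n : ℕ} (g : (Fin n → ℂ) → Matrix (Fin n) (Fin n) ℂ) (z : ℝ → Fin n → ℂ)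

lemma D2z_decomp (hg : MetricC1 g) (hz : ContDiff ℝ 2 z)
    (hL : ∀ σ, 0 < curveL g z σ) (σ : ℝ) (a : Fin n) :
    D2z g z a σ = ((D2x g z a σ : ℝ) : ℂ) + Complex.I * ((D2t g z a σ : ℝ) : ℂ) := by
  set h : ℝ → ℂ := fun τ => (curveL g z τ : ℂ)⁻¹ * deriv (fun s => z s a) τ with hh
  have hfun : h = fun τ => (((curveL g z τ)⁻¹ * deriv (fun s => (z s a).re) τ : ℝ) : ℂ)
      + Complex.I * (((curveL g z τ)⁻¹ * deriv (fun s => (z s a).im) τ : ℝ) : ℂ) := by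
    funext τ
    rw [hh]
    simp only
    rw [coord_deriv_decomp z hz a τ]
    push_cast
    ring
  have hdiff : DifferentiableAt ℝ h σ := by
    apply DifferentiableAt.mul
    · have h1 : DifferentiableAt ℝ (fun τ => ((curveL g z τ)⁻¹ : ℝ)) σ :=
        (curveL_diff g z hg hz hL σ).inv (hL σ).ne'
      have h2 : DifferentiableAt ℝ (fun τ => (((curveL g z τ)⁻¹ : ℝ) : ℂ)) σ :=
        Complex.ofRealCLM.differentiableAt.comp σ h1
      have : (fun τ => ((curveL g z τ : ℝ) : ℂ)⁻¹) = fun τ => (((curveL g z τ)⁻¹ : ℝ) : ℂ) := by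
        funext τ; push_cast; ring
      rw [this]
      exact h2
    · exact coord_deriv_diff z hz a σ
  have hre : (fun τ => (h τ).re) = fun τ => (curveL g z τ)⁻¹ * deriv (fun s => (z s a).re) τ := by
    funext τ
    rw [congrFun hfun τ]
    simp
  have him : (fun τ => (h τ).im) = fun τ => (curveL g z τ)⁻¹ * deriv (fun s => (z s a).im) τ := by
    funext τ
    rw [congrFun hfun τ]
    simp
  have hd := deriv_decomp h σ hdiff
  rw [hre, him] at hd
  show (curveL g z σ : ℂ)⁻¹ * deriv h σ = _
  rw [hd]
  unfold D2x D2t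
  push_cast
  ring
end Curve2

/-- Positive-definiteness of the real part matrix. -/
lemma gRmat_posdef {n : ℕ} (g : (Fin n → ℂ) → Matrix (Fin n) (Fin n) ℂ)
    (hherm : IsHermitianMetric g)
    (hpos : ∀ w, (g w).PosDef) (w : Fin n → ℂ) : (gRmat g w).PosDef := by
  rw [Matrix.posDef_iff_dotProduct_mulVec]
  constructor
  · ext i j
    simp only [Matrix.conjTranspose_apply, gRmat, Matrix.of_apply, star_trivial]
    rw [hherm w j i]
    simp
  · intro x hx
    have hx' : (fun i => ((x i : ℝ) : ℂ)) ≠ 0 := by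
      intro h
      apply hx
      funext i
      have := congrFun h i
      simpa using this
    have h := (hpos w).dotProduct_mulVec_pos hx'
    rw [Complex.pos_iff] at h
    have hre := h.1
    convert hre using 1
    · rfl
    simp only [dotProduct, Matrix.mulVec, Pi.star_apply, star_trivial,
      RCLike.star_def]
    rw [Complex.re_sum]
    apply Finset.sum_congr rfl
    intro i _
    simp only [Complex.conj_ofReal, Finset.mul_sum, Complex.re_sum]
    apply Finset.sum_congr rfl
    intro j _
    simp [gRmat, Complex.mul_re]

lemma link_id {n : ℕ} (g : (Fin n → ℂ) → Matrix (Fin n) (Fin n) ℂ)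
    (hherm : IsHermitianMetric g)
    (hpos : ∀ w, (g w).PosDef) (w : Fin n → ℂ) (μ γ : Fin n) :
    ∑ η, eps g w η γ * (g w μ η).re = (g w μ γ).im := by
  have hpd := gRmat_posdef g hherm hpos w
  have hdet : IsUnit (gRmat g w).det := isUnit_iff_ne_zero.2 hpd.det_pos.ne'
  have hinv : (gRmat g w)⁻¹ * (gRmat g w) = 1 := Matrix.nonsing_inv_mul _ hdet
  have hGRsym : ∀ a b, (gRmat g w) a b = (gRmat g w) b a := by
    intro a b
    have h2 := congrFun (congrFun hpd.isHermitian.eq a) b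
    simpa [Matrix.conjTranspose_apply] using h2.symm
  calc ∑ η, eps g w η γ * (g w μ η).re
      = ∑ ν, (g w ν γ).im * ∑ η, (gRmat g w)⁻¹ ν η * (gRmat g w) η μ := by
        simp only [eps, Finset.sum_mul]
        rw [Finset.sum_comm]
        apply Finset.sum_congr rfl; intro ν _
        rw [Finset.mul_sum]
        apply Finset.sum_congr rfl; intro η _
        have : (gRmat g w) η μ = (g w μ η).re := by
          rw [hGRsym η μ]; rfl
        rw [this]; ring
    _ = (g w μ γ).im := by
        have h1 : ∀ ν, ∑ η, (gRmat g w)⁻¹ ν η * (gRmat g w) η μ = if ν = μ then 1 else 0 := by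
          intro ν
          have := congrFun (congrFun hinv ν) μ
          simpa [Matrix.mul_apply, Matrix.one_apply] using this
        simp only [h1, mul_ite, mul_one, mul_zero]
        simp

/-- Theorem 2: the real projective geodesic equation. -/
theorem real_projective_geodesic {n : ℕ}
    (g : (Fin n → ℂ) → Matrix (Fin n) (Fin n) ℂ)
    (hg : MetricC1 g) (hherm : IsHermitianMetric g)
    (hpos : ∀ w, (g w).PosDef)
    (z : ℝ → Fin n → ℂ) (hz : ContDiff ℝ 2 z)
    (hL : ∀ σ, 0 < curveL g z σ) (hgeo : GeodesicEq g z)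
    (γ : Fin n) (σ : ℝ) :
    ∑ μ, (gR g μ γ (z σ) + ∑ η, (eps g (z σ) η γ : ℂ) * gI g μ η (z σ)) *
        (D2x g z μ σ : ℂ) =
      (∑ α, ∑ β, Ups11 g γ α β (z σ) * (Dx g z α σ : ℂ) * (Dx g z β σ : ℂ)) -
        (∑ α, ∑ β, Ups10 g γ α β (z σ) * (Dt g z α σ : ℂ) * (Dx g z β σ : ℂ)) -
        ∑ α, ∑ β, Ups00 g γ α β (z σ) * (Dt g z α σ : ℂ) * (Dt g z β σ : ℂ) := by
  have hDzd : ∀ a, Dz g z a σ = ((Dx g z a σ : ℝ) : ℂ) + Complex.I * ((Dt g z a σ : ℝ) : ℂ) :=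
    fun a => Dz_decomp g z hz a σ
  have hDzc : ∀ a, (starRingEnd ℂ) (Dz g z a σ)
      = ((Dx g z a σ : ℝ) : ℂ) - Complex.I * ((Dt g z a σ : ℝ) : ℂ) := by
    intro a
    rw [hDzd a]
    simp [Complex.conj_ofReal, sub_eq_add_neg]
  have hD2zd : ∀ a, D2z g z a σ = ((D2x g z a σ : ℝ) : ℂ)
      + Complex.I * ((D2t g z a σ : ℝ) : ℂ) :=
    fun a => D2z_decomp g z hg hz hL σ a
  -- the geodesic right-hand side as a function of the free index
  set P : Fin n → ℂ := fun c =>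
    (∑ α, ∑ β, (dWbar c (gF g α β) (z σ) - dWbar β (gF g α c) (z σ)) *
        Dz g z α σ * (starRingEnd ℂ) (Dz g z β σ)) -
      ∑ α, ∑ β, dW α (gF g β c) (z σ) * Dz g z α σ * Dz g z β σ with hPdef
  set LF : Fin n → ℂ := fun c => ∑ μ, g (z σ) μ c * D2z g z μ σ with hLFdef
  have hgeoP : ∀ c, LF c = P c := fun c => hgeo c σ
  have hP : ∀ c, P c =
      (∑ a, ∑ b,
        ((((xrAt g (z σ) c a b : ℝ):ℂ) + Complex.I*((xiAt g (z σ) c a b : ℝ):ℂ)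
            + Complex.I*(((trAt g (z σ) c a b : ℝ):ℂ) + Complex.I*((tiAt g (z σ) c a b : ℝ):ℂ)))/2
          - (((xrAt g (z σ) b a c : ℝ):ℂ) + Complex.I*((xiAt g (z σ) b a c : ℝ):ℂ)
            + Complex.I*(((trAt g (z σ) b a c : ℝ):ℂ) + Complex.I*((tiAt g (z σ) b a c : ℝ):ℂ)))/2)
          * (((Dx g z a σ : ℝ):ℂ) + Complex.I*((Dt g z a σ : ℝ):ℂ))
          * (((Dx g z b σ : ℝ):ℂ) - Complex.I*((Dt g z b σ : ℝ):ℂ)))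
      - ∑ a, ∑ b,
        ((((xrAt g (z σ) a b c : ℝ):ℂ) + Complex.I*((xiAt g (z σ) a b c : ℝ):ℂ)
            - Complex.I*(((trAt g (z σ) a b c : ℝ):ℂ) + Complex.I*((tiAt g (z σ) a b c : ℝ):ℂ)))/2)
          * (((Dx g z a σ : ℝ):ℂ) + Complex.I*((Dt g z a σ : ℝ):ℂ))
          * (((Dx g z b σ : ℝ):ℂ) + Complex.I*((Dt g z b σ : ℝ):ℂ)) := by
    intro c
    rw [hPdef]
    simp only [dWbar, dW, dX_gF_eq g hg (z σ), dT_gF_eq g hg (z σ), hDzc]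
    simp only [hDzd]
  have hKC := key_complex (xrAt g (z σ)) (xiAt g (z σ)) (trAt g (z σ)) (tiAt g (z σ))
    (fun a => Dx g z a σ) (fun a => Dt g z a σ) (fun η => eps g (z σ) η γ) γ
    (xrAt_sym hherm (z σ)) (xiAt_sym hherm (z σ)) (trAt_sym hherm (z σ)) (tiAt_sym hherm (z σ))
    P hP
  have hlink : ∀ μ, ∑ η, eps g (z σ) η γ * (g (z σ) μ η).re = (g (z σ) μ γ).im :=
    fun μ => link_id g hherm hpos (z σ) μ γ
  have hLc : ∀ c, LF c = ∑ μ, ((((g (z σ) μ c).re : ℝ):ℂ) + Complex.I * (((g (z σ) μ c).im : ℝ):ℂ))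
      * (((D2x g z μ σ : ℝ):ℂ) + Complex.I * ((D2t g z μ σ : ℝ):ℂ)) := by
    intro c
    rw [hLFdef]
    apply Finset.sum_congr rfl
    intro μ _
    rw [hD2zd μ]
    congr 1
    rw [mul_comm Complex.I _]
    exact_mod_cast (Complex.re_add_im (g (z σ) μ c)).symm
  have step1 := lhs_combo (fun μ c => (g (z σ) μ c).re) (fun μ c => (g (z σ) μ c).im)
    (fun η => eps g (z σ) η γ) (fun μ => D2x g z μ σ) (fun μ => D2t g z μ σ) γ hlink LF hLc
  calc ∑ μ, (gR g μ γ (z σ) + ∑ η, (eps g (z σ) η γ : ℂ) * gI g μ η (z σ)) * (D2x g z μ σ : ℂ)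
      = (LF γ + (starRingEnd ℂ) (LF γ))/2
        + ∑ η, ((eps g (z σ) η γ : ℝ):ℂ) * ((LF η - (starRingEnd ℂ) (LF η))/(2*Complex.I)) :=
        step1
    _ = (P γ + (starRingEnd ℂ) (P γ))/2
        + ∑ η, ((eps g (z σ) η γ : ℝ):ℂ) * ((P η - (starRingEnd ℂ) (P η))/(2*Complex.I)) := by
        simp only [hgeoP]
    _ = _ := by
        rw [← hKC]
        simp only [Ups11, Ups10, Ups00, PhiPP, PhiPM, PhiMM, PhiMP, Fx, Ft,
          dX_gR_eq, dX_gI_eq, dT_gR_eq, dT_gI_eq]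
end
end

section
/- (Corollary 1: reduction to the gravitational geodesic.) Let n = 4 and let g be a C¹ metric on ℂ⁴ that is pointwise real symmetric (g^I ≡ 0, g = g^R symmetric) and positive definite, and assume ∂^x_1 g_{αβ̄} ≡ 0 and ∂^t_γ g_{αβ̄} ≡ 0 for γ ∈ {2,3,4} and all α, β. Let z = x + it : ℝ → ℂ⁴ be a C² curve with L(σ) > 0 satisfying the complex geodesic equation, and suppose that along the curve Dx¹ = 0 and Dt^γ = 0 for γ ∈ {2,3,4}. Then for every γ ∈ {2,3,4} and every σ: Σ_μ g_{μγ̄}(z) D²x^μ = Σ_{α,β} Φ^{γ++}_{αβ} Dx^α Dx^β − Σ_β ∂^t_1 g_{βγ̄} · Dt¹ · Dx^β + ½·∂^x_γ g_{11̄} · (Dt¹)², all coefficient functions evaluated at z(σ); i.e. the projective geodesic reduces to the classical gravitational geodesic form in the coordinates (t¹, x², x³, x⁴). -/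
open Complex
open scoped ComplexOrder

noncomputable section

section AuxLemmas

/-- The real part of a derivative along `ℝ`. -/
lemma hasDerivAt_complex_re {e : ℝ → ℂ} {e' : ℂ} {x : ℝ} (h : HasDerivAt e e' x) :
    HasDerivAt (fun t => (e t).re) e'.re x := by
  exact (Complex.reCLM.hasFDerivAt (x := e x)).comp_hasDerivAt x h

/-- The imaginary part of a derivative along `ℝ`. -/
lemma hasDerivAt_complex_im {e : ℝ → ℂ} {e' : ℂ} {x : ℝ} (h : HasDerivAt e e' x) :
    HasDerivAt (fun t => (e t).im) e'.im x := by
  exact (Complex.imCLM.hasFDerivAt (x := e x)).comp_hasDerivAt x h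

/-- The derivative of a real-valued (as a complex function) function of a real
variable has vanishing imaginary part. -/
lemma im_deriv_eq_zero {f : ℝ → ℂ} (hf : ∀ s, (f s).im = 0) (x : ℝ) :
    (deriv f x).im = 0 := by
  by_cases h : DifferentiableAt ℝ f x
  · have h1 := hasDerivAt_complex_im h.hasDerivAt
    have h2 : (fun t => (f t).im) = fun _ => (0 : ℝ) := funext hf
    rw [h2] at h1
    simpa using h1.unique (hasDerivAt_const x 0)
  · rw [deriv_zero_of_not_differentiableAt h]; simp

end AuxLemmas

/-- Corollary 1: for a real symmetric positive definite metric on `ℂ⁴` (indices `1,2,3,4`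
rendered as `0,1,2,3 : Fin 4`, so the distinguished index `1` is `0`), independent of `x¹`
and of `t²,t³,t⁴`, a complex geodesic with `Dx¹ = 0` and `Dt² = Dt³ = Dt⁴ = 0` projects to
the classical gravitational geodesic in the coordinates `(t¹, x², x³, x⁴)`. -/
theorem gravitational_reduction
    (g : (Fin 4 → ℂ) → Matrix (Fin 4) (Fin 4) ℂ)
    (hg : MetricC1 g) (hherm : IsHermitianMetric g)
    (hreal : ∀ w i j, (g w i j).im = 0)
    (hpos : ∀ w, (g w).PosDef)
    (hx1 : ∀ (α β : Fin 4) (w : Fin 4 → ℂ), dX (0 : Fin 4) (gF g α β) w = 0)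
    (ht : ∀ γ : Fin 4, γ ≠ 0 → ∀ (α β : Fin 4) (w : Fin 4 → ℂ), dT γ (gF g α β) w = 0)
    (z : ℝ → Fin 4 → ℂ) (hz : ContDiff ℝ 2 z)
    (hL : ∀ σ, 0 < curveL g z σ) (hgeo : GeodesicEq g z)
    (hDx1 : ∀ σ, Dx g z (0 : Fin 4) σ = 0)
    (hDt : ∀ γ : Fin 4, γ ≠ 0 → ∀ σ, Dt g z γ σ = 0)
    (γ : Fin 4) (hγ : γ ≠ 0) (σ : ℝ) :
    ∑ μ, gF g μ γ (z σ) * (D2x g z μ σ : ℂ) =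
      (∑ α, ∑ β, PhiPP g γ α β (z σ) * (Dx g z α σ : ℂ) * (Dx g z β σ : ℂ)) -
        (∑ β, dT (0 : Fin 4) (gF g β γ) (z σ) * (Dt g z (0 : Fin 4) σ : ℂ) *
          (Dx g z β σ : ℂ)) +
        dX γ (gF g (0 : Fin 4) (0 : Fin 4)) (z σ) / 2 * (Dt g z (0 : Fin 4) σ : ℂ) ^ 2 := by
  classical
  have hz1 : Differentiable ℝ z := hz.differentiable (by norm_num)
  have hzα : ∀ α : Fin 4, ContDiff ℝ 2 (fun τ => z τ α) := fun α => contDiff_pi.mp hz α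
  have hzd : ∀ (α : Fin 4) (τ : ℝ), DifferentiableAt ℝ (fun τ => z τ α) τ :=
    fun α τ => ((hzα α).differentiable (by norm_num)).differentiableAt
  have hzderiv : ∀ α : Fin 4, Differentiable ℝ (deriv (fun τ => z τ α)) := by
    intro α
    have h := hzα α
    rw [show (2 : WithTop ℕ∞) = 1 + 1 from by norm_num] at h
    exact (contDiff_succ_iff_deriv.mp h).2.2.differentiable (by norm_num)
  have hQpos : ∀ τ, 0 < (∑ α, ∑ β, g (z τ) α β * deriv (fun s => z s α) τ *
      (starRingEnd ℂ) (deriv (fun s => z s β) τ)).re := by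
    intro τ
    have h := hL τ
    simp only [curveL, Lag] at h
    exact Real.sqrt_pos.mp h
  have hLdiff : ∀ τ, DifferentiableAt ℝ (curveL g z) τ := by
    intro τ
    have hS : DifferentiableAt ℝ (fun τ => ∑ α, ∑ β, g (z τ) α β * deriv (fun s => z s α) τ *
        (starRingEnd ℂ) (deriv (fun s => z s β) τ)) τ := by
      apply DifferentiableAt.fun_sum
      intro α _
      apply DifferentiableAt.fun_sum
      intro β _
      have hgαβ : DifferentiableAt ℝ (fun τ => g (z τ) α β) τ :=
        (((hg α β).differentiable (by norm_num)).comp hz1).differentiableAt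
      have hc : DifferentiableAt ℝ (fun τ => (starRingEnd ℂ) (deriv (fun s => z s β) τ)) τ :=
        (Complex.conjCLE.differentiable.comp (hzderiv β)).differentiableAt
      exact (hgαβ.mul ((hzderiv α) τ)).mul hc
    have hQd : DifferentiableAt ℝ (fun τ => (∑ α, ∑ β, g (z τ) α β * deriv (fun s => z s α) τ *
        (starRingEnd ℂ) (deriv (fun s => z s β) τ)).re) τ :=
      Complex.reCLM.differentiableAt.comp τ hS
    have hEq : curveL g z = fun τ => Real.sqrt ((∑ α, ∑ β, g (z τ) α β *
        deriv (fun s => z s α) τ * (starRingEnd ℂ) (deriv (fun s => z s β) τ)).re) := rfl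
    rw [hEq]
    exact hQd.sqrt (hQpos τ).ne'
  have hLinvC : ∀ τ, DifferentiableAt ℝ (fun τ' => ((curveL g z τ' : ℂ))⁻¹) τ := by
    intro τ
    have h1 : (fun τ' => ((curveL g z τ' : ℂ))⁻¹)
        = fun τ' => (((curveL g z τ')⁻¹ : ℝ) : ℂ) := by
      funext τ'
      exact (Complex.ofReal_inv _).symm
    rw [h1]
    exact Complex.ofRealCLM.differentiableAt.comp τ ((hLdiff τ).inv (hL τ).ne')
  have hderivre : ∀ (μ : Fin 4) (τ : ℝ),
      deriv (fun s => (z s μ).re) τ = (deriv (fun s => z s μ) τ).re :=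
    fun μ τ => (hasDerivAt_complex_re (hzd μ τ).hasDerivAt).deriv
  have hderivim : ∀ (μ : Fin 4) (τ : ℝ),
      deriv (fun s => (z s μ).im) τ = (deriv (fun s => z s μ) τ).im :=
    fun μ τ => (hasDerivAt_complex_im (hzd μ τ).hasDerivAt).deriv
  have hwre : ∀ μ : Fin 4, (fun τ => (((curveL g z τ : ℂ))⁻¹ * deriv (fun s => z s μ) τ).re)
      = fun τ => (curveL g z τ)⁻¹ * deriv (fun s => (z s μ).re) τ := by
    intro μ; funext τ
    rw [hderivre μ τ, ← Complex.ofReal_inv]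
    simp [Complex.mul_re]
  have hwim : ∀ μ : Fin 4, (fun τ => (((curveL g z τ : ℂ))⁻¹ * deriv (fun s => z s μ) τ).im)
      = fun τ => (curveL g z τ)⁻¹ * deriv (fun s => (z s μ).im) τ := by
    intro μ; funext τ
    rw [hderivim μ τ, ← Complex.ofReal_inv]
    simp [Complex.mul_im]
  have hwdiff : ∀ μ : Fin 4, DifferentiableAt ℝ
      (fun τ => ((curveL g z τ : ℂ))⁻¹ * deriv (fun s => z s μ) τ) σ :=
    fun μ => (hLinvC σ).mul ((hzderiv μ) σ)
  have hD2 : ∀ μ : Fin 4, D2z g z μ σ = (D2x g z μ σ : ℂ) + Complex.I * (D2t g z μ σ : ℂ) := by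
    intro μ
    have hw := (hwdiff μ).hasDerivAt
    have h1 : deriv (fun τ => (curveL g z τ)⁻¹ * deriv (fun s => (z s μ).re) τ) σ
        = (deriv (fun τ => ((curveL g z τ : ℂ))⁻¹ * deriv (fun s => z s μ) τ) σ).re := by
      rw [← hwre μ]
      exact (hasDerivAt_complex_re hw).deriv
    have h2 : deriv (fun τ => (curveL g z τ)⁻¹ * deriv (fun s => (z s μ).im) τ) σ
        = (deriv (fun τ => ((curveL g z τ : ℂ))⁻¹ * deriv (fun s => z s μ) τ) σ).im := by
      rw [← hwim μ]
      exact (hasDerivAt_complex_im hw).deriv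
    simp only [D2z, D2x, D2t, h1, h2]
    rw [← Complex.ofReal_inv]
    apply Complex.ext <;> simp [Complex.mul_re, Complex.mul_im]
  have hDzv : ∀ α : Fin 4, Dz g z α σ = (Dx g z α σ : ℂ) + Complex.I * (Dt g z α σ : ℂ) := by
    intro α
    simp only [Dz, Dx, Dt, hderivre α σ, hderivim α σ]
    rw [← Complex.ofReal_inv]
    apply Complex.ext <;> simp [Complex.mul_re, Complex.mul_im]
  -- realness of the coefficient fields
  have hXim : ∀ (a b c : Fin 4) (w : Fin 4 → ℂ), (dX a (gF g b c) w).im = 0 :=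
    fun a b c w => im_deriv_eq_zero (fun s => hreal _ b c) 0
  have hTim : ∀ (a b c : Fin 4) (w : Fin 4 → ℂ), (dT a (gF g b c) w).im = 0 :=
    fun a b c w => im_deriv_eq_zero (fun s => hreal _ b c) 0
  -- vanishing derivatives
  have hTγ : ∀ (b c : Fin 4) (w : Fin 4 → ℂ), dT γ (gF g b c) w = 0 := ht γ hγ
  have hT1 : ∀ (b c : Fin 4) (w : Fin 4 → ℂ), dT 1 (gF g b c) w = 0 := ht 1 (by decide)
  have hT2 : ∀ (b c : Fin 4) (w : Fin 4 → ℂ), dT 2 (gF g b c) w = 0 := ht 2 (by decide)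
  have hT3 : ∀ (b c : Fin 4) (w : Fin 4 → ℂ), dT 3 (gF g b c) w = 0 := ht 3 (by decide)
  have hgf : ∀ (i j : Fin 4) (w : Fin 4 → ℂ), gF g i j w = g w i j := fun _ _ _ => rfl
  have hgRF : ∀ i j : Fin 4, gR g i j = gF g i j := by
    intro i j; funext w
    apply Complex.ext
    · simp [gR, gF]
    · simp [gR, gF, hreal]
  have hDx0 : Dx g z 0 σ = 0 := hDx1 σ
  have hDt1 : Dt g z 1 σ = 0 := hDt 1 (by decide) σ
  have hDt2 : Dt g z 2 σ = 0 := hDt 2 (by decide) σ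
  have hDt3 : Dt g z 3 σ = 0 := hDt 3 (by decide) σ
  have h2c : ∀ c : ℂ, c / 2 = ((2⁻¹ : ℝ) : ℂ) * c := by
    intro c; push_cast; ring
  have geo := hgeo γ σ
  simp only [Fin.sum_univ_four] at geo ⊢
  simp only [dWbar, dW, hD2, hDzv, hTγ, hT1, hT2, hT3, hx1, map_add, map_mul,
    Complex.conj_ofReal, Complex.conj_I, hDx0, hDt1, hDt2, hDt3, Complex.ofReal_zero,
    mul_zero, zero_mul, add_zero, zero_add, sub_zero, zero_sub, neg_zero, h2c] at geo
  simp only [PhiPP, hgRF, hgf, hx1, hDx0, Complex.ofReal_zero, pow_two,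
    mul_zero, zero_mul, add_zero, zero_add, sub_zero, zero_sub, neg_zero, h2c]
  rw [Complex.ext_iff] at geo
  obtain ⟨geoRe, -⟩ := geo
  rw [Complex.ext_iff]
  constructor
  · simp only [Complex.add_re, Complex.add_im, Complex.sub_re, Complex.sub_im,
      Complex.mul_re, Complex.mul_im, Complex.neg_re, Complex.neg_im,
      Complex.I_re, Complex.I_im, Complex.ofReal_re, Complex.ofReal_im,
      hXim, hTim, hreal, mul_zero, zero_mul, sub_zero, add_zero, zero_add,
      neg_zero, zero_sub, mul_one, one_mul, mul_neg, neg_mul, neg_neg] at geoRe ⊢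
    linear_combination geoRe
  · simp only [Complex.add_re, Complex.add_im, Complex.sub_re, Complex.sub_im,
      Complex.mul_re, Complex.mul_im, Complex.neg_re, Complex.neg_im,
      Complex.I_re, Complex.I_im, Complex.ofReal_re, Complex.ofReal_im,
      hXim, hTim, hreal, mul_zero, zero_mul, sub_zero, add_zero, zero_add,
      neg_zero, zero_sub, mul_one, one_mul, mul_neg, neg_mul, neg_neg]
    try ring
end
end
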